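/- arXiv:1109.4007 — 4 statements merged into one kernel-verified Lean document; each statement's English description precedes it below -/
import Mathlib

section
/- For V ≥ 2, the tail sum Σ_{k > V} 2^{ω(k)}/(k²·φ(k)) is O((log V)/V²). -/
open Finset

namespace Stmt3Aux

/-- Telescoping bound for cubic sums. -/
lemma icc_cube_le (m : ℕ) (hm : 1 ≤ m) : ∀ N : ℕ,
    ∑ b ∈ Icc m N, (((b : ℝ)) ^ 3)⁻¹ ≤ 2 / (m : ℝ) ^ 2 := by
  have hm0 : (0 : ℝ) < m := by exact_mod_cast hm
  intro N
  rcases le_or_gt m N with hNm | hNm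
  · have key : ∀ N : ℕ, m ≤ N → ∑ b ∈ Icc m N, (((b : ℝ)) ^ 3)⁻¹ ≤
        2 / (m : ℝ) ^ 2 - ((N : ℝ) ^ 2)⁻¹ := by
      intro N hN
      induction N, hN using Nat.le_induction with
      | base =>
          rw [Finset.Icc_self, Finset.sum_singleton]
          have h1 : ((m : ℝ) ^ 3)⁻¹ ≤ ((m : ℝ) ^ 2)⁻¹ := by
            apply inv_anti₀ (by positivity)
            calc (m : ℝ) ^ 2 = (m:ℝ)^2 * 1 := by ring
            _ ≤ (m:ℝ)^2 * m := by
                apply mul_le_mul_of_nonneg_left _ (by positivity)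
                exact_mod_cast hm
            _ = (m:ℝ)^3 := by ring
          have h2 : ((m : ℝ) ^ 2)⁻¹ ≤ 2 / (m : ℝ) ^ 2 - ((m : ℝ) ^ 2)⁻¹ := by
            rw [div_eq_mul_inv]
            nlinarith [inv_nonneg.2 (le_of_lt (by positivity : (0:ℝ) < (m:ℝ)^2))]
          exact h1.trans h2
      | succ N hN ih =>
          rw [Finset.sum_Icc_succ_top (by omega)]
          have hN0 : (0:ℝ) < N := by
            have : (1:ℕ) ≤ N := le_trans hm hN
            exact_mod_cast this
          have hstep : (((N : ℝ) + 1) ^ 3)⁻¹ ≤ ((N : ℝ)^2)⁻¹ - (((N:ℝ)+1) ^ 2)⁻¹ := by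
            rw [inv_sub_inv (by positivity : ((N:ℝ)^2) ≠ 0) (by positivity : (((N:ℝ)+1)^2) ≠ 0),
              inv_eq_one_div, div_le_div_iff₀ (by positivity) (by positivity)]
            nlinarith [hN0]
          push_cast
          push_cast at ih hstep
          linarith
    calc ∑ b ∈ Icc m N, (((b : ℝ)) ^ 3)⁻¹ ≤ 2 / (m : ℝ) ^ 2 - ((N : ℝ) ^ 2)⁻¹ :=
          key N hNm
      _ ≤ 2 / (m : ℝ) ^ 2 := by
          have : (0:ℝ) ≤ ((N : ℝ) ^ 2)⁻¹ := by positivity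
          linarith
  · rw [Finset.Icc_eq_empty (by omega), Finset.sum_empty]
    positivity

/-- cubic tail bound over any finite set, with a real cutoff. -/
lemma cube_tail (y : ℝ) (hy : 0 < y) (s : Finset ℕ) :
    ∑ b ∈ s.filter (fun b : ℕ => y < (b : ℝ)), (((b : ℝ)) ^ 3)⁻¹ ≤ 2 / y ^ 2 := by
  set m : ℕ := ⌊y⌋₊ + 1 with hmdef
  have hsub : s.filter (fun b : ℕ => y < (b : ℝ)) ⊆ Icc m (s.sup id) := by
    intro b hb
    rw [Finset.mem_filter] at hb
    rw [Finset.mem_Icc]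
    constructor
    · have : ⌊y⌋₊ < b := (Nat.floor_lt hy.le).2 hb.2
      omega
    · exact Finset.le_sup (f := id) hb.1
  calc ∑ b ∈ s.filter (fun b : ℕ => y < (b : ℝ)), (((b : ℝ)) ^ 3)⁻¹
      ≤ ∑ b ∈ Icc m (s.sup id), (((b : ℝ)) ^ 3)⁻¹ := by
        apply Finset.sum_le_sum_of_subset_of_nonneg hsub
        intro i _ _; positivity
    _ ≤ 2 / (m : ℝ) ^ 2 := icc_cube_le m (by omega) _
    _ ≤ 2 / y ^ 2 := by
        apply div_le_div_of_nonneg_left (by norm_num) (by positivity)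
        have : y < m := by
          rw [hmdef]; push_cast; exact Nat.lt_floor_add_one y
        nlinarith
/-- cubic sum bound over any finite set. -/
lemma cube_all (s : Finset ℕ) : ∑ b ∈ s, (((b : ℝ)) ^ 3)⁻¹ ≤ 2 := by
  calc ∑ b ∈ s, (((b : ℝ)) ^ 3)⁻¹
      ≤ ∑ b ∈ insert 0 (Icc 1 (s.sup id)), (((b : ℝ)) ^ 3)⁻¹ := by
        apply Finset.sum_le_sum_of_subset_of_nonneg
        · intro b hb
          rcases Nat.eq_zero_or_pos b with h0 | h1
          · simp [h0]
          · apply Finset.mem_insert_of_mem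
            rw [Finset.mem_Icc]
            exact ⟨h1, Finset.le_sup (f := id) hb⟩
        · intro i _ _; positivity
    _ = 0 + ∑ b ∈ Icc 1 (s.sup id), (((b : ℝ)) ^ 3)⁻¹ := by
        rw [Finset.sum_insert (by simp)]; norm_num
    _ ≤ 2 := by
        rw [zero_add]
        have := icc_cube_le 1 le_rfl (s.sup id)
        simpa using this

/-- harmonic bound. -/
lemma icc_harmonic_le : ∀ N : ℕ, ∑ a ∈ Icc 1 N, ((a : ℝ))⁻¹ ≤ 1 + Real.log N := by
  intro N
  induction N with
  | zero => simp
  | succ N ih =>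
      rcases Nat.eq_zero_or_pos N with h0 | h1
      · subst h0; norm_num
      · rw [Finset.sum_Icc_succ_top (by omega)]
        have hN0 : (0:ℝ) < N := by exact_mod_cast h1
        have hstep : ((N : ℝ) + 1)⁻¹ ≤ Real.log (N + 1) - Real.log N := by
          have h := Real.log_le_sub_one_of_pos (x := (N : ℝ) / (N + 1)) (by positivity)
          rw [Real.log_div (by positivity) (by positivity)] at h
          have : (N : ℝ) / (N + 1) - 1 = -(((N:ℝ)+1)⁻¹) := by
            field_simp
            ring
          rw [this] at h
          linarith
        push_cast
        linarith
/-- The key rearrangement: a sum over k ∈ s of sums over divisor pairs of k is at most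
a double sum over a box, keeping a condition Q satisfied by all elements of s. -/
lemma rearrange (F : ℕ → ℕ → ℝ) (hF : ∀ a b, 0 ≤ F a b) (Q : ℕ → Prop) [DecidablePred Q]
    (s : Finset ℕ) (N : ℕ) (hs : ∀ k ∈ s, k ≤ N ∧ Q k) :
    ∑ k ∈ s, ∑ p ∈ k.divisorsAntidiagonal, F p.1 p.2 ≤
      ∑ a ∈ Icc 1 N, ∑ b ∈ Icc 1 N, if Q (a * b) then F a b else 0 := by
  classical
  have hdisj : (s : Set ℕ).PairwiseDisjoint Nat.divisorsAntidiagonal := by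
    intro x _ y _ hxy
    simp only [Finset.disjoint_left]
    intro p hpx hpy
    rw [Nat.mem_divisorsAntidiagonal] at hpx hpy
    exact hxy (hpx.1.symm.trans hpy.1)
  rw [← Finset.sum_biUnion hdisj]
  have hsub : s.biUnion Nat.divisorsAntidiagonal ⊆
      ((Icc 1 N) ×ˢ (Icc 1 N)).filter (fun p => Q (p.1 * p.2)) := by
    intro p hp
    rw [Finset.mem_biUnion] at hp
    obtain ⟨k, hk, hpk⟩ := hp
    rw [Nat.mem_divisorsAntidiagonal] at hpk
    obtain ⟨hprod, hk0⟩ := hpk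
    have h1 : 1 ≤ p.1 := by
      rcases Nat.eq_zero_or_pos p.1 with h | h
      · exfalso; apply hk0; rw [← hprod, h, zero_mul]
      · exact h
    have h2 : 1 ≤ p.2 := by
      rcases Nat.eq_zero_or_pos p.2 with h | h
      · exfalso; apply hk0; rw [← hprod, h, mul_zero]
      · exact h
    have hle1 : p.1 ≤ N := by
      calc p.1 ≤ p.1 * p.2 := Nat.le_mul_of_pos_right _ h2
        _ = k := hprod
        _ ≤ N := (hs k hk).1
    have hle2 : p.2 ≤ N := by
      calc p.2 ≤ p.1 * p.2 := Nat.le_mul_of_pos_left _ h1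
        _ = k := hprod
        _ ≤ N := (hs k hk).1
    rw [Finset.mem_filter, Finset.mem_product, Finset.mem_Icc, Finset.mem_Icc]
    refine ⟨⟨⟨h1, hle1⟩, ⟨h2, hle2⟩⟩, ?_⟩
    rw [hprod]; exact (hs k hk).2
  calc ∑ p ∈ s.biUnion Nat.divisorsAntidiagonal, F p.1 p.2
      ≤ ∑ p ∈ ((Icc 1 N) ×ˢ (Icc 1 N)).filter (fun p => Q (p.1 * p.2)), F p.1 p.2 :=
        Finset.sum_le_sum_of_subset_of_nonneg hsub (fun p _ _ => hF p.1 p.2)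
    _ = ∑ p ∈ (Icc 1 N) ×ˢ (Icc 1 N), if Q (p.1 * p.2) then F p.1 p.2 else 0 :=
        Finset.sum_filter _ _
    _ = ∑ a ∈ Icc 1 N, ∑ b ∈ Icc 1 N, if Q (a * b) then F a b else 0 :=
        Finset.sum_product _ _ _

/-- `2^ω(m) ≤ τ(m)` -/
lemma two_pow_omega_le_tau {m : ℕ} (hm : m ≠ 0) :
    2 ^ m.primeFactors.card ≤ m.divisors.card := by
  rw [Nat.card_divisors hm]
  rw [← Finset.prod_const]
  apply Finset.prod_le_prod'
  intro p hp
  have : m.factorization p ≠ 0 := by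
    rwa [← Finsupp.mem_support_iff, Nat.support_factorization]
  omega

lemma omega_mul_le {e c : ℕ} (he : e ≠ 0) (hc : c ≠ 0) :
    (e * c).primeFactors.card ≤ e.primeFactors.card + c.primeFactors.card := by
  rw [Nat.primeFactors_mul he hc]
  exact (Finset.card_union_le _ _)
noncomputable def w (e : ℕ) : ℝ :=
  if Squarefree e then (2:ℝ) ^ e.primeFactors.card / (e.totient : ℝ) else 0

lemma w_nonneg (e : ℕ) : 0 ≤ w e := by
  unfold w; split
  · positivity
  · exact le_rfl

lemma totient_prod_primes {s : Finset ℕ} (hs : ∀ p ∈ s, p.Prime) :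
    (∏ p ∈ s, p).totient = ∏ p ∈ s, (p - 1) := by
  have hPF : (∏ p ∈ s, p).primeFactors = s := Nat.primeFactors_prod hs
  have h := Nat.totient_mul_prod_primeFactors (∏ p ∈ s, p)
  rw [hPF] at h
  have hpos : 0 < ∏ p ∈ s, p :=
    Finset.prod_pos fun p hp => (hs p hp).pos
  exact Nat.eq_of_mul_eq_mul_right hpos (by linarith [h])

lemma cast_prod_sub_one {s : Finset ℕ} (hs : ∀ p ∈ s, p.Prime) :
    ((∏ p ∈ s, (p - 1) : ℕ) : ℝ) = ∏ p ∈ s, ((p : ℝ) - 1) := by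
  rw [Nat.cast_prod]
  exact Finset.prod_congr rfl fun p hp => by
    have : 1 ≤ p := (hs p hp).one_lt.le
    push_cast [Nat.cast_sub this]
    ring

lemma k_div_totient_eq {k : ℕ} (hk : k ≠ 0) :
    (k : ℝ) / (k.totient : ℝ) = ∏ p ∈ k.primeFactors, ((p : ℝ) / ((p : ℝ) - 1)) := by
  have hprimes : ∀ p ∈ k.primeFactors, p.Prime := fun p hp => Nat.prime_of_mem_primeFactors hp
  have h := Nat.totient_mul_prod_primeFactors k
  have hR : (k.totient : ℝ) * ∏ p ∈ k.primeFactors, (p : ℝ) =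
      (k : ℝ) * ∏ p ∈ k.primeFactors, ((p : ℝ) - 1) := by
    have := congrArg (fun n : ℕ => (n : ℝ)) h
    push_cast at this
    have h2 : ∏ i ∈ k.primeFactors, (((i - 1 : ℕ)) : ℝ) =
        ∏ p ∈ k.primeFactors, ((p : ℝ) - 1) := Finset.prod_congr rfl fun p hp => by
      have h1 : 1 ≤ p := (hprimes p hp).one_lt.le
      push_cast [Nat.cast_sub h1]
      ring
    rwa [h2] at this
  have h1 : (0:ℝ) < (k.totient : ℝ) := by
    exact_mod_cast Nat.totient_pos.2 (Nat.pos_of_ne_zero hk)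
  have h2 : (0:ℝ) < ∏ p ∈ k.primeFactors, ((p : ℝ) - 1) := by
    apply Finset.prod_pos
    intro p hp
    have := (hprimes p hp).one_lt
    have : (1:ℝ) < p := by exact_mod_cast this
    linarith
  rw [Finset.prod_div_distrib]
  rw [div_eq_div_iff h1.ne' h2.ne']
  linarith [hR]
lemma per_subset {k : ℕ} (hk : k ≠ 0) {i : Finset ℕ} (hi : i ⊆ k.primeFactors) :
    (2:ℝ) ^ k.primeFactors.card * ∏ p ∈ i, ((p : ℝ) - 1)⁻¹ ≤
      (2:ℝ) ^ (∏ p ∈ i, p).primeFactors.card / (((∏ p ∈ i, p).totient : ℝ)) *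
        (((k / ∏ p ∈ i, p).divisors.card : ℕ) : ℝ) := by
  have hprime : ∀ p ∈ i, p.Prime := fun p hp =>
    Nat.prime_of_mem_primeFactors (hi hp)
  set e := ∏ p ∈ i, p with he
  have hPF : e.primeFactors = i := Nat.primeFactors_prod hprime
  have hω : e.primeFactors.card = i.card := by rw [hPF]
  have he0 : 0 < e := Finset.prod_pos fun p hp => (hprime p hp).pos
  have hφ : e.totient = ∏ p ∈ i, (p - 1) := totient_prod_primes hprime
  have hφR : (e.totient : ℝ) = ∏ p ∈ i, ((p : ℝ) - 1) := by
    rw [hφ]; exact cast_prod_sub_one hprime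
  have hφpos : (0:ℝ) < ∏ p ∈ i, ((p : ℝ) - 1) := by
    apply Finset.prod_pos
    intro p hp
    have : (1:ℝ) < p := by exact_mod_cast (hprime p hp).one_lt
    linarith
  have hdvd : e ∣ k := by
    refine dvd_trans ?_ (Nat.prod_primeFactors_dvd k)
    exact Finset.prod_dvd_prod_of_subset _ _ _ hi
  have hq0 : 0 < k / e := Nat.div_pos (Nat.le_of_dvd (Nat.pos_of_ne_zero hk) hdvd) he0
  -- ℕ inequality
  have hnat : 2 ^ k.primeFactors.card ≤ 2 ^ i.card * (k / e).divisors.card := by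
    have h1 : k.primeFactors.card ≤ i.card + (k / e).primeFactors.card := by
      have hk' : e * (k / e) = k := Nat.mul_div_cancel' hdvd
      calc k.primeFactors.card = (e * (k / e)).primeFactors.card := by rw [hk']
        _ ≤ e.primeFactors.card + (k / e).primeFactors.card :=
            omega_mul_le he0.ne' hq0.ne'
        _ = i.card + (k / e).primeFactors.card := by rw [hω]
    calc 2 ^ k.primeFactors.card ≤ 2 ^ (i.card + (k / e).primeFactors.card) :=
          Nat.pow_le_pow_right (by norm_num) h1
      _ = 2 ^ i.card * 2 ^ (k / e).primeFactors.card := pow_add 2 _ _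
      _ ≤ 2 ^ i.card * (k / e).divisors.card :=
          Nat.mul_le_mul_left _ (two_pow_omega_le_tau hq0.ne')
  have hnatR : (2:ℝ) ^ k.primeFactors.card ≤
      (2:ℝ) ^ i.card * (((k / e).divisors.card : ℕ) : ℝ) := by
    exact_mod_cast hnat
  rw [hω, hφR]
  have hinv : ∏ p ∈ i, ((p : ℝ) - 1)⁻¹ = (∏ p ∈ i, ((p : ℝ) - 1))⁻¹ :=
    Finset.prod_inv_distrib _
  rw [hinv, div_mul_eq_mul_div, div_eq_mul_inv]
  exact mul_le_mul_of_nonneg_right hnatR (by positivity)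

lemma core {k : ℕ} (hk : k ≠ 0) :
    (2:ℝ) ^ k.primeFactors.card * (k : ℝ) / (k.totient : ℝ) ≤
      ∑ p ∈ k.divisorsAntidiagonal, w p.1 * ((p.2.divisors.card : ℕ) : ℝ) := by
  classical
  rw [Nat.sum_divisorsAntidiagonal (f := fun a b => w a * ((b.divisors.card : ℕ) : ℝ))]
  have step1 : ∑ e ∈ k.divisors, w e * (((k / e).divisors.card : ℕ) : ℝ) =
      ∑ e ∈ k.divisors with Squarefree e,
        (2:ℝ) ^ e.primeFactors.card / (e.totient : ℝ) * (((k / e).divisors.card : ℕ) : ℝ) := by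
    rw [Finset.sum_filter]
    apply Finset.sum_congr rfl
    intro e _
    unfold w
    split <;> simp
  rw [step1]
  rw [Nat.sum_divisors_filter_squarefree hk]
  have hind : (UniqueFactorizationMonoid.normalizedFactors k).toFinset = k.primeFactors := by
    rw [Nat.factors_eq]
    simp
  rw [hind]
  have hval : ∀ i ∈ k.primeFactors.powerset,
      (2:ℝ) ^ (i.val.prod).primeFactors.card / ((i.val.prod).totient : ℝ) *
        (((k / i.val.prod).divisors.card : ℕ) : ℝ) =
      (2:ℝ) ^ ((∏ p ∈ i, p)).primeFactors.card / (((∏ p ∈ i, p)).totient : ℝ) *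
        (((k / ∏ p ∈ i, p).divisors.card : ℕ) : ℝ) := by
    intro i _
    rw [Finset.prod_val]
    rfl
  rw [Finset.sum_congr rfl hval]
  have hbound : ∑ i ∈ k.primeFactors.powerset,
      (2:ℝ) ^ k.primeFactors.card * ∏ p ∈ i, ((p : ℝ) - 1)⁻¹ ≤
      ∑ i ∈ k.primeFactors.powerset,
        (2:ℝ) ^ ((∏ p ∈ i, p)).primeFactors.card / (((∏ p ∈ i, p)).totient : ℝ) *
          (((k / ∏ p ∈ i, p).divisors.card : ℕ) : ℝ) := by
    apply Finset.sum_le_sum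
    intro i hi
    exact per_subset hk (Finset.mem_powerset.1 hi)
  refine le_trans ?_ hbound
  rw [← Finset.mul_sum]
  have hps : ∑ i ∈ k.primeFactors.powerset, ∏ p ∈ i, ((p : ℝ) - 1)⁻¹ =
      ∏ p ∈ k.primeFactors, (((p : ℝ) - 1)⁻¹ + 1) := by
    rw [Finset.prod_add]
    apply Finset.sum_congr rfl
    intro i _
    simp
  rw [hps]
  have hfinal : ∏ p ∈ k.primeFactors, (((p : ℝ) - 1)⁻¹ + 1) =
      ∏ p ∈ k.primeFactors, ((p : ℝ) / ((p : ℝ) - 1)) := by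
    apply Finset.prod_congr rfl
    intro p hp
    have h2 : (1:ℝ) < p := by exact_mod_cast (Nat.prime_of_mem_primeFactors hp).one_lt
    have h3 : (p : ℝ) - 1 ≠ 0 := by linarith
    field_simp
    ring
  rw [hfinal, ← k_div_totient_eq hk, mul_div_assoc]
lemma harmonic_tail (y : ℝ) (s : Finset ℕ) :
    ∑ a ∈ s.filter (fun a : ℕ => (a : ℝ) ≤ y), ((a : ℝ))⁻¹ ≤ 1 + Real.log (max y 1) := by
  have hlog0 : 0 ≤ Real.log (max y 1) := Real.log_nonneg (le_max_right y 1)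
  rcases lt_or_ge y 1 with hy | hy
  · have : ∑ a ∈ s.filter (fun a : ℕ => (a : ℝ) ≤ y), ((a : ℝ))⁻¹ = 0 := by
      apply Finset.sum_eq_zero
      intro a ha
      rw [Finset.mem_filter] at ha
      have : a = 0 := by
        by_contra h
        have h1 : 1 ≤ a := Nat.one_le_iff_ne_zero.2 h
        have : (1 : ℝ) ≤ a := by exact_mod_cast h1
        linarith [ha.2]
      simp [this]
    rw [this]; linarith
  · have hmax : max y 1 = y := max_eq_left hy
    set M := ⌊y⌋₊ with hM
    have hM1 : 1 ≤ M := Nat.le_floor (by exact_mod_cast hy)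
    have hsub : s.filter (fun a : ℕ => (a : ℝ) ≤ y) ⊆ insert 0 (Icc 1 M) := by
      intro a ha
      rw [Finset.mem_filter] at ha
      rcases Nat.eq_zero_or_pos a with h0 | h1
      · simp [h0]
      · apply Finset.mem_insert_of_mem
        rw [Finset.mem_Icc]
        exact ⟨h1, Nat.le_floor ha.2⟩
    calc ∑ a ∈ s.filter (fun a : ℕ => (a : ℝ) ≤ y), ((a : ℝ))⁻¹
        ≤ ∑ a ∈ insert 0 (Icc 1 M), ((a : ℝ))⁻¹ := by
          apply Finset.sum_le_sum_of_subset_of_nonneg hsub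
          intro a _ _; positivity
      _ = ((0:ℕ) : ℝ)⁻¹ + ∑ a ∈ Icc 1 M, ((a : ℝ))⁻¹ := Finset.sum_insert (by simp)
      _ = ∑ a ∈ Icc 1 M, ((a : ℝ))⁻¹ := by norm_num
      _ ≤ 1 + Real.log M := icc_harmonic_le M
      _ ≤ 1 + Real.log (max y 1) := by
          rw [hmax]
          have h1 : (0:ℝ) < M := by exact_mod_cast hM1
          have h2 : (M : ℝ) ≤ y := Nat.floor_le (by linarith)
          have := Real.log_le_log h1 h2
          linarith

lemma tau_cube_eq {c : ℕ} (hc : c ≠ 0) :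
    ∑ p ∈ c.divisorsAntidiagonal, (((p.1 : ℝ)) ^ 3)⁻¹ * (((p.2 : ℝ)) ^ 3)⁻¹ =
      (c.divisors.card : ℝ) / (c : ℝ) ^ 3 := by
  rw [Nat.sum_divisorsAntidiagonal (f := fun a b => (((a : ℝ)) ^ 3)⁻¹ * (((b : ℝ)) ^ 3)⁻¹)]
  have : ∀ a ∈ c.divisors, (((a : ℝ)) ^ 3)⁻¹ * (((c / a : ℕ) : ℝ) ^ 3)⁻¹ = ((c : ℝ) ^ 3)⁻¹ := by
    intro a ha
    rw [Nat.mem_divisors] at ha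
    have hmul : a * (c / a) = c := Nat.mul_div_cancel' ha.1
    rw [← mul_inv, ← mul_pow]
    congr 2
    exact_mod_cast congrArg (fun n : ℕ => (n : ℝ)) hmul
  rw [Finset.sum_congr rfl this, Finset.sum_const, nsmul_eq_mul, div_eq_mul_inv]

lemma tau_tail (y : ℝ) (hy : 0 < y) (s : Finset ℕ) :
    ∑ c ∈ s.filter (fun c : ℕ => y < (c : ℝ)), (c.divisors.card : ℝ) / (c : ℝ) ^ 3 ≤
      (6 + 2 * Real.log (max y 1)) / y ^ 2 := by
  classical
  set s' := s.filter (fun c : ℕ => y < (c : ℝ)) with hs'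
  set N := s'.sup id with hN
  have hmem : ∀ c ∈ s', c ≠ 0 ∧ c ≤ N ∧ y < (c : ℝ) := by
    intro c hc
    have h2 : y < (c : ℝ) := (Finset.mem_filter.1 hc).2
    refine ⟨?_, Finset.le_sup (f := id) hc, h2⟩
    intro h0
    rw [h0] at h2; push_cast at h2; linarith
  have step1 : ∑ c ∈ s', (c.divisors.card : ℝ) / (c : ℝ) ^ 3 =
      ∑ c ∈ s', ∑ p ∈ c.divisorsAntidiagonal, (((p.1 : ℝ)) ^ 3)⁻¹ * (((p.2 : ℝ)) ^ 3)⁻¹ :=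
    Finset.sum_congr rfl fun c hc => (tau_cube_eq (hmem c hc).1).symm
  have step2 : ∑ c ∈ s', ∑ p ∈ c.divisorsAntidiagonal,
        (((p.1 : ℝ)) ^ 3)⁻¹ * (((p.2 : ℝ)) ^ 3)⁻¹ ≤
      ∑ a ∈ Icc 1 N, ∑ b ∈ Icc 1 N,
        if y < ((a * b : ℕ) : ℝ) then (((a : ℝ)) ^ 3)⁻¹ * (((b : ℝ)) ^ 3)⁻¹ else 0 := by
    exact rearrange (fun a b => (((a : ℝ)) ^ 3)⁻¹ * (((b : ℝ)) ^ 3)⁻¹)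
      (fun a b => by positivity) (fun c => y < (c : ℝ)) s' N
      (fun k hk => ⟨(hmem k hk).2.1, (hmem k hk).2.2⟩)
  have step3 : ∀ a ∈ Icc 1 N,
      (∑ b ∈ Icc 1 N, if y < ((a * b : ℕ) : ℝ) then (((a : ℝ)) ^ 3)⁻¹ * (((b : ℝ)) ^ 3)⁻¹ else 0)
      = (((a : ℝ)) ^ 3)⁻¹ *
        ∑ b ∈ (Icc 1 N).filter (fun b : ℕ => y < ((a * b : ℕ) : ℝ)), (((b : ℝ)) ^ 3)⁻¹ := by
    intro a _
    rw [Finset.sum_filter, Finset.mul_sum]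
    exact Finset.sum_congr rfl fun b _ => by rw [mul_ite, mul_zero]
  -- bounds for the inner sum
  have inner_bound1 : ∀ a : ℕ, 1 ≤ a →
      ∑ b ∈ (Icc 1 N).filter (fun b : ℕ => y < ((a * b : ℕ) : ℝ)), (((b : ℝ)) ^ 3)⁻¹ ≤
        2 * (a : ℝ) ^ 2 / y ^ 2 := by
    intro a ha
    have ha0 : (0:ℝ) < a := by exact_mod_cast ha
    have hsub : (Icc 1 N).filter (fun b : ℕ => y < ((a * b : ℕ) : ℝ)) ⊆
        (Icc 1 N).filter (fun b : ℕ => y / (a : ℝ) < (b : ℝ)) := by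
      intro b hb
      rw [Finset.mem_filter] at hb ⊢
      refine ⟨hb.1, ?_⟩
      have : y < (a : ℝ) * (b : ℝ) := by push_cast at hb; exact hb.2
      rw [div_lt_iff₀ ha0]
      nlinarith
    calc ∑ b ∈ (Icc 1 N).filter (fun b : ℕ => y < ((a * b : ℕ) : ℝ)), (((b : ℝ)) ^ 3)⁻¹
        ≤ ∑ b ∈ (Icc 1 N).filter (fun b : ℕ => y / (a : ℝ) < (b : ℝ)), (((b : ℝ)) ^ 3)⁻¹ := by
          apply Finset.sum_le_sum_of_subset_of_nonneg hsub
          intro b _ _; positivity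
      _ ≤ 2 / (y / (a : ℝ)) ^ 2 := cube_tail _ (by positivity) _
      _ = 2 * (a : ℝ) ^ 2 / y ^ 2 := by
          rw [div_pow]; field_simp
  have inner_bound2 : ∀ a : ℕ,
      ∑ b ∈ (Icc 1 N).filter (fun b : ℕ => y < ((a * b : ℕ) : ℝ)), (((b : ℝ)) ^ 3)⁻¹ ≤ 2 :=
    fun a => cube_all _
  rw [hs'] at step1
  rw [step1]
  refine le_trans (le_trans step2 (le_of_eq (Finset.sum_congr rfl step3))) ?_
  rw [← Finset.sum_filter_add_sum_filter_not (Icc 1 N) (fun a : ℕ => (a : ℝ) ≤ y)]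
  have part1 : ∑ a ∈ (Icc 1 N).filter (fun a : ℕ => (a : ℝ) ≤ y),
      (((a : ℝ)) ^ 3)⁻¹ *
        (∑ b ∈ (Icc 1 N).filter (fun b : ℕ => y < ((a * b : ℕ) : ℝ)), (((b : ℝ)) ^ 3)⁻¹) ≤
      (2 / y ^ 2) * (1 + Real.log (max y 1)) := by
    have hstep : ∀ a ∈ (Icc 1 N).filter (fun a : ℕ => (a : ℝ) ≤ y),
        (((a : ℝ)) ^ 3)⁻¹ *
          (∑ b ∈ (Icc 1 N).filter (fun b : ℕ => y < ((a * b : ℕ) : ℝ)), (((b : ℝ)) ^ 3)⁻¹) ≤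
        (2 / y ^ 2) * ((a : ℝ))⁻¹ := by
      intro a ha
      rw [Finset.mem_filter, Finset.mem_Icc] at ha
      have ha1 : 1 ≤ a := ha.1.1
      have ha0 : (0:ℝ) < a := by exact_mod_cast ha1
      calc (((a : ℝ)) ^ 3)⁻¹ *
            (∑ b ∈ (Icc 1 N).filter (fun b : ℕ => y < ((a * b : ℕ) : ℝ)), (((b : ℝ)) ^ 3)⁻¹)
          ≤ (((a : ℝ)) ^ 3)⁻¹ * (2 * (a : ℝ) ^ 2 / y ^ 2) :=
            mul_le_mul_of_nonneg_left (inner_bound1 a ha1) (by positivity)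
        _ = (2 / y ^ 2) * ((a : ℝ))⁻¹ := by
            field_simp
    calc ∑ a ∈ (Icc 1 N).filter (fun a : ℕ => (a : ℝ) ≤ y),
          (((a : ℝ)) ^ 3)⁻¹ *
            (∑ b ∈ (Icc 1 N).filter (fun b : ℕ => y < ((a * b : ℕ) : ℝ)), (((b : ℝ)) ^ 3)⁻¹)
        ≤ ∑ a ∈ (Icc 1 N).filter (fun a : ℕ => (a : ℝ) ≤ y), (2 / y ^ 2) * ((a : ℝ))⁻¹ :=
          Finset.sum_le_sum hstep
      _ = (2 / y ^ 2) * ∑ a ∈ (Icc 1 N).filter (fun a : ℕ => (a : ℝ) ≤ y), ((a : ℝ))⁻¹ :=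
          (Finset.mul_sum _ _ _).symm
      _ ≤ (2 / y ^ 2) * (1 + Real.log (max y 1)) := by
          apply mul_le_mul_of_nonneg_left (harmonic_tail y _) (by positivity)
  have part2 : ∑ a ∈ (Icc 1 N).filter (fun a : ℕ => ¬((a : ℝ) ≤ y)),
      (((a : ℝ)) ^ 3)⁻¹ *
        (∑ b ∈ (Icc 1 N).filter (fun b : ℕ => y < ((a * b : ℕ) : ℝ)), (((b : ℝ)) ^ 3)⁻¹) ≤
      4 / y ^ 2 := by
    have hstep : ∀ a ∈ (Icc 1 N).filter (fun a : ℕ => ¬((a : ℝ) ≤ y)),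
        (((a : ℝ)) ^ 3)⁻¹ *
          (∑ b ∈ (Icc 1 N).filter (fun b : ℕ => y < ((a * b : ℕ) : ℝ)), (((b : ℝ)) ^ 3)⁻¹) ≤
        2 * (((a : ℝ)) ^ 3)⁻¹ := by
      intro a _
      rw [mul_comm]
      exact mul_le_mul_of_nonneg_right (inner_bound2 a) (by positivity)
    have hfc : (Icc 1 N).filter (fun a : ℕ => ¬((a : ℝ) ≤ y)) =
        (Icc 1 N).filter (fun a : ℕ => y < (a : ℝ)) := by
      apply Finset.filter_congr
      intro a _
      simp [not_le]
    calc ∑ a ∈ (Icc 1 N).filter (fun a : ℕ => ¬((a : ℝ) ≤ y)),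
          (((a : ℝ)) ^ 3)⁻¹ *
            (∑ b ∈ (Icc 1 N).filter (fun b : ℕ => y < ((a * b : ℕ) : ℝ)), (((b : ℝ)) ^ 3)⁻¹)
        ≤ ∑ a ∈ (Icc 1 N).filter (fun a : ℕ => ¬((a : ℝ) ≤ y)), 2 * (((a : ℝ)) ^ 3)⁻¹ :=
          Finset.sum_le_sum hstep
      _ = 2 * ∑ a ∈ (Icc 1 N).filter (fun a : ℕ => y < (a : ℝ)), (((a : ℝ)) ^ 3)⁻¹ := by
          rw [hfc, Finset.mul_sum]
      _ ≤ 2 * (2 / y ^ 2) := mul_le_mul_of_nonneg_left (cube_tail y hy _) (by norm_num)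
      _ = 4 / y ^ 2 := by ring
  have hlog0 : 0 ≤ Real.log (max y 1) := Real.log_nonneg (le_max_right y 1)
  calc _ ≤ (2 / y ^ 2) * (1 + Real.log (max y 1)) + 4 / y ^ 2 := add_le_add part1 part2
    _ = (6 + 2 * Real.log (max y 1)) / y ^ 2 := by field_simp; ring
lemma icc_sq_le (N : ℕ) : ∑ u ∈ Icc 1 N, (((u : ℝ)) ^ 2)⁻¹ ≤ 2 := by
  rcases Nat.eq_zero_or_pos N with h0 | h1
  · subst h0; simp
  · have key : ∀ M : ℕ, 1 ≤ M → ∑ u ∈ Icc 1 M, (((u : ℝ)) ^ 2)⁻¹ ≤ 2 - ((M : ℝ))⁻¹ := by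
      intro M hM
      induction M, hM using Nat.le_induction with
      | base => norm_num
      | succ M hM ih =>
          rw [Finset.sum_Icc_succ_top (by omega)]
          have hM0 : (0:ℝ) < M := by exact_mod_cast hM
          have hstep : (((M : ℝ) + 1) ^ 2)⁻¹ ≤ ((M : ℝ))⁻¹ - (((M : ℝ) + 1))⁻¹ := by
            rw [inv_sub_inv (by positivity) (by positivity)]
            rw [inv_eq_one_div, div_le_div_iff₀ (by positivity) (by positivity)]
            nlinarith
          push_cast
          push_cast at ih hstep
          linarith
    have := key N h1
    have hN0 : (0:ℝ) < N := by exact_mod_cast h1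
    have : (0:ℝ) ≤ ((N:ℝ))⁻¹ := by positivity
    linarith [key N h1]

lemma tau_sq_eq {c : ℕ} (hc : c ≠ 0) :
    ∑ p ∈ c.divisorsAntidiagonal, (((p.1 : ℝ)) ^ 2)⁻¹ * (((p.2 : ℝ)) ^ 2)⁻¹ =
      (c.divisors.card : ℝ) / (c : ℝ) ^ 2 := by
  rw [Nat.sum_divisorsAntidiagonal (f := fun a b => (((a : ℝ)) ^ 2)⁻¹ * (((b : ℝ)) ^ 2)⁻¹)]
  have : ∀ a ∈ c.divisors, (((a : ℝ)) ^ 2)⁻¹ * (((c / a : ℕ) : ℝ) ^ 2)⁻¹ = ((c : ℝ) ^ 2)⁻¹ := by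
    intro a ha
    rw [Nat.mem_divisors] at ha
    have hmul : a * (c / a) = c := Nat.mul_div_cancel' ha.1
    rw [← mul_inv, ← mul_pow]
    congr 2
    exact_mod_cast congrArg (fun n : ℕ => (n : ℝ)) hmul
  rw [Finset.sum_congr rfl this, Finset.sum_const, nsmul_eq_mul, div_eq_mul_inv]

lemma sum_tau_sq_le (N : ℕ) :
    ∑ a ∈ Icc 1 N, (a.divisors.card : ℝ) / (a : ℝ) ^ 2 ≤ 4 := by
  classical
  have step1 : ∑ a ∈ Icc 1 N, (a.divisors.card : ℝ) / (a : ℝ) ^ 2 =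
      ∑ a ∈ Icc 1 N, ∑ p ∈ a.divisorsAntidiagonal,
        (((p.1 : ℝ)) ^ 2)⁻¹ * (((p.2 : ℝ)) ^ 2)⁻¹ := by
    apply Finset.sum_congr rfl
    intro a ha
    rw [Finset.mem_Icc] at ha
    exact (tau_sq_eq (by omega)).symm
  rw [step1]
  have step2 := rearrange (fun a b => (((a : ℝ)) ^ 2)⁻¹ * (((b : ℝ)) ^ 2)⁻¹)
    (fun a b => by positivity) (fun _ => True) (Icc 1 N) N
    (fun k hk => ⟨(Finset.mem_Icc.1 hk).2, trivial⟩)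
  simp only [if_true] at step2
  refine le_trans step2 ?_
  have : ∑ a ∈ Icc 1 N, ∑ b ∈ Icc 1 N, (((a : ℝ)) ^ 2)⁻¹ * (((b : ℝ)) ^ 2)⁻¹ =
      (∑ a ∈ Icc 1 N, (((a : ℝ)) ^ 2)⁻¹) * (∑ b ∈ Icc 1 N, (((b : ℝ)) ^ 2)⁻¹) := by
    rw [Finset.sum_mul_sum]
  rw [this]
  have h := icc_sq_le N
  have hnn : (0:ℝ) ≤ ∑ u ∈ Icc 1 N, (((u : ℝ)) ^ 2)⁻¹ :=
    Finset.sum_nonneg fun u _ => by positivity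
  nlinarith

lemma sum_two_pow_sq_le (N : ℕ) :
    ∑ a ∈ Icc 1 N, (2:ℝ) ^ a.primeFactors.card / (a : ℝ) ^ 2 ≤ 4 := by
  refine le_trans (Finset.sum_le_sum ?_) (sum_tau_sq_le N)
  intro a ha
  rw [Finset.mem_Icc] at ha
  have h1 : (2:ℝ) ^ a.primeFactors.card ≤ (a.divisors.card : ℝ) := by
    exact_mod_cast two_pow_omega_le_tau (by omega)
  apply div_le_div_of_nonneg_right h1 (by positivity)

lemma squarefree_le_two_pow_mul_totient {e : ℕ} (he : Squarefree e) :
    e ≤ 2 ^ e.primeFactors.card * e.totient := by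
  have hprimes : ∀ p ∈ e.primeFactors, p.Prime := fun p hp => Nat.prime_of_mem_primeFactors hp
  have heprod : ∏ p ∈ e.primeFactors, p = e := Nat.prod_primeFactors_of_squarefree he
  have hφ : e.totient = ∏ p ∈ e.primeFactors, (p - 1) := by
    conv_lhs => rw [← heprod]
    exact totient_prod_primes hprimes
  calc e = ∏ p ∈ e.primeFactors, p := heprod.symm
    _ ≤ ∏ p ∈ e.primeFactors, 2 * (p - 1) := by
        apply Finset.prod_le_prod'
        intro p hp
        have := (hprimes p hp).two_le
        omega
    _ = 2 ^ e.primeFactors.card * ∏ p ∈ e.primeFactors, (p - 1) := by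
        rw [Finset.prod_mul_distrib, Finset.prod_const]
    _ = 2 ^ e.primeFactors.card * e.totient := by rw [hφ]

lemma w_pointwise {e : ℕ} (he : 1 ≤ e) :
    w e / (e : ℝ) ≤ ∑ p ∈ e.divisorsAntidiagonal,
      ((2:ℝ) ^ p.1.primeFactors.card / (p.1 : ℝ) ^ 2) *
        ((2:ℝ) ^ p.2.primeFactors.card / (p.2 : ℝ) ^ 2) := by
  by_cases hsq : Squarefree e
  case neg =>
    have : w e = 0 := by unfold w; rw [if_neg hsq]
    rw [this, zero_div]
    apply Finset.sum_nonneg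
    intro p _; positivity
  case pos =>
  have he0 : e ≠ 0 := by omega
  have heR : (0:ℝ) < e := by exact_mod_cast he
  have hφpos : (0:ℝ) < (e.totient : ℝ) := by
    exact_mod_cast Nat.totient_pos.2 (by omega)
  -- lower bound for the RHS
  have hlow : ∀ a ∈ e.divisors,
      (2:ℝ) ^ e.primeFactors.card * (((e : ℝ)) ^ 2)⁻¹ ≤
        ((2:ℝ) ^ a.primeFactors.card / (a : ℝ) ^ 2) *
          ((2:ℝ) ^ (e / a).primeFactors.card / ((e / a : ℕ) : ℝ) ^ 2) := by
    intro a ha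
    rw [Nat.mem_divisors] at ha
    have hmul : a * (e / a) = e := Nat.mul_div_cancel' ha.1
    have ha0 : a ≠ 0 := by
      intro h; rw [h, zero_mul] at hmul; exact he0 hmul.symm
    have hq0 : e / a ≠ 0 := by
      intro h; rw [h, mul_zero] at hmul; exact he0 hmul.symm
    have homega : e.primeFactors.card ≤ a.primeFactors.card + (e / a).primeFactors.card := by
      calc e.primeFactors.card = (a * (e / a)).primeFactors.card := by rw [hmul]
        _ ≤ _ := omega_mul_le ha0 hq0
    have hpow : (2:ℝ) ^ e.primeFactors.card ≤
        (2:ℝ) ^ a.primeFactors.card * (2:ℝ) ^ (e / a).primeFactors.card := by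
      rw [← pow_add]
      exact pow_le_pow_right₀ (by norm_num) homega
    have hcast : ((a : ℝ)) ^ 2 * (((e / a : ℕ) : ℝ)) ^ 2 = ((e : ℝ)) ^ 2 := by
      rw [← mul_pow]
      congr 1
      exact_mod_cast congrArg (fun n : ℕ => (n : ℝ)) hmul
    rw [div_mul_div_comm, hcast, div_eq_mul_inv]
    exact mul_le_mul_of_nonneg_right hpow (by positivity)
  have hRHS : (e.divisors.card : ℝ) * ((2:ℝ) ^ e.primeFactors.card * (((e : ℝ)) ^ 2)⁻¹) ≤
      ∑ p ∈ e.divisorsAntidiagonal,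
        ((2:ℝ) ^ p.1.primeFactors.card / (p.1 : ℝ) ^ 2) *
          ((2:ℝ) ^ p.2.primeFactors.card / (p.2 : ℝ) ^ 2) := by
    rw [Nat.sum_divisorsAntidiagonal (f := fun a b =>
      ((2:ℝ) ^ a.primeFactors.card / (a : ℝ) ^ 2) *
        ((2:ℝ) ^ b.primeFactors.card / (b : ℝ) ^ 2))]
    calc (e.divisors.card : ℝ) * ((2:ℝ) ^ e.primeFactors.card * (((e : ℝ)) ^ 2)⁻¹)
        = ∑ _a ∈ e.divisors, (2:ℝ) ^ e.primeFactors.card * (((e : ℝ)) ^ 2)⁻¹ := by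
          rw [Finset.sum_const, nsmul_eq_mul]
      _ ≤ _ := Finset.sum_le_sum hlow
  have htau : (2:ℝ) ^ e.primeFactors.card ≤ (e.divisors.card : ℝ) := by
    exact_mod_cast two_pow_omega_le_tau he0
  have hSQ : (e : ℝ) ≤ (2:ℝ) ^ e.primeFactors.card * (e.totient : ℝ) := by
    exact_mod_cast squarefree_le_two_pow_mul_totient hsq
  have hLHS : w e / (e : ℝ) ≤
      (2:ℝ) ^ e.primeFactors.card * ((2:ℝ) ^ e.primeFactors.card * (((e : ℝ)) ^ 2)⁻¹) := by
    unfold w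
    rw [if_pos hsq, div_div]
    rw [div_le_iff₀ (by positivity)]
    have h2 : (0:ℝ) < (2:ℝ) ^ e.primeFactors.card := by positivity
    calc (2:ℝ) ^ e.primeFactors.card
        = (2:ℝ) ^ e.primeFactors.card * ((e:ℝ) * (e:ℝ)) * (((e : ℝ)) ^ 2)⁻¹ := by
          field_simp
      _ ≤ (2:ℝ) ^ e.primeFactors.card * ((2:ℝ) ^ e.primeFactors.card *
            (e.totient : ℝ) * (e:ℝ)) * (((e : ℝ)) ^ 2)⁻¹ := by
          apply mul_le_mul_of_nonneg_right _ (by positivity)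
          apply mul_le_mul_of_nonneg_left _ (by positivity)
          exact mul_le_mul_of_nonneg_right hSQ (by positivity)
      _ = (2:ℝ) ^ e.primeFactors.card * ((2:ℝ) ^ e.primeFactors.card * (((e : ℝ)) ^ 2)⁻¹) *
            ((e.totient : ℝ) * (e:ℝ)) := by ring
  refine le_trans hLHS (le_trans ?_ hRHS)
  apply mul_le_mul_of_nonneg_right htau (by positivity)

lemma sum_w_le (N : ℕ) : ∑ e ∈ Icc 1 N, w e / (e : ℝ) ≤ 16 := by
  classical
  have step1 : ∑ e ∈ Icc 1 N, w e / (e : ℝ) ≤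
      ∑ e ∈ Icc 1 N, ∑ p ∈ e.divisorsAntidiagonal,
        ((2:ℝ) ^ p.1.primeFactors.card / (p.1 : ℝ) ^ 2) *
          ((2:ℝ) ^ p.2.primeFactors.card / (p.2 : ℝ) ^ 2) := by
    apply Finset.sum_le_sum
    intro e he
    exact w_pointwise (Finset.mem_Icc.1 he).1
  have step2 := rearrange (fun a b =>
      ((2:ℝ) ^ a.primeFactors.card / (a : ℝ) ^ 2) *
        ((2:ℝ) ^ b.primeFactors.card / (b : ℝ) ^ 2))
    (fun a b => by positivity) (fun _ => True) (Icc 1 N) N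
    (fun k hk => ⟨(Finset.mem_Icc.1 hk).2, trivial⟩)
  simp only [if_true] at step2
  refine le_trans step1 (le_trans step2 ?_)
  have heq : ∑ a ∈ Icc 1 N, ∑ b ∈ Icc 1 N,
      ((2:ℝ) ^ a.primeFactors.card / (a : ℝ) ^ 2) *
        ((2:ℝ) ^ b.primeFactors.card / (b : ℝ) ^ 2) =
      (∑ a ∈ Icc 1 N, (2:ℝ) ^ a.primeFactors.card / (a : ℝ) ^ 2) *
        (∑ b ∈ Icc 1 N, (2:ℝ) ^ b.primeFactors.card / (b : ℝ) ^ 2) := by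
    rw [Finset.sum_mul_sum]
  rw [heq]
  have h := sum_two_pow_sq_le N
  have hnn : (0:ℝ) ≤ ∑ a ∈ Icc 1 N, (2:ℝ) ^ a.primeFactors.card / (a : ℝ) ^ 2 :=
    Finset.sum_nonneg fun a _ => by positivity
  nlinarith
lemma pointwise_start {k : ℕ} (hk : k ≠ 0) :
    (2:ℝ) ^ k.primeFactors.card / ((k : ℝ) ^ 2 * (k.totient : ℝ)) ≤
      ∑ p ∈ k.divisorsAntidiagonal,
        (w p.1 / (p.1 : ℝ) ^ 3) * ((p.2.divisors.card : ℝ) / (p.2 : ℝ) ^ 3) := by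
  have hkR : (0:ℝ) < k := by exact_mod_cast Nat.pos_of_ne_zero hk
  have hφ : (0:ℝ) < (k.totient : ℝ) := by
    exact_mod_cast Nat.totient_pos.2 (Nat.pos_of_ne_zero hk)
  have h1 : ∑ p ∈ k.divisorsAntidiagonal,
      (w p.1 / (p.1 : ℝ) ^ 3) * ((p.2.divisors.card : ℝ) / (p.2 : ℝ) ^ 3) =
      (∑ p ∈ k.divisorsAntidiagonal, w p.1 * ((p.2.divisors.card : ℕ) : ℝ)) / (k : ℝ) ^ 3 := by
    rw [Finset.sum_div]
    apply Finset.sum_congr rfl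
    intro p hp
    rw [Nat.mem_divisorsAntidiagonal] at hp
    have hp1 : p.1 ≠ 0 := by
      intro h; apply hp.2; rw [← hp.1, h, zero_mul]
    have hp2 : p.2 ≠ 0 := by
      intro h; apply hp.2; rw [← hp.1, h, mul_zero]
    have hcast : ((p.1 : ℝ)) ^ 3 * ((p.2 : ℝ)) ^ 3 = ((k : ℝ)) ^ 3 := by
      rw [← mul_pow]
      congr 1
      exact_mod_cast congrArg (fun n : ℕ => (n : ℝ)) hp.1
    rw [div_mul_div_comm, hcast]
  rw [h1]
  have h2 : (2:ℝ) ^ k.primeFactors.card / ((k : ℝ) ^ 2 * (k.totient : ℝ)) =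
      ((2:ℝ) ^ k.primeFactors.card * (k : ℝ) / (k.totient : ℝ)) / (k : ℝ) ^ 3 := by
    field_simp
  rw [h2]
  exact div_le_div_of_nonneg_right (core hk) (by positivity)


end Stmt3Aux

open Stmt3Aux

/-- For `V ≥ 2`, `Σ_{k > V} 2^{ω(k)}/(k²·φ(k)) = O((log V)/V²)`. -/
theorem stmt3 :
    ∃ C : ℝ, ∀ V : ℕ, 2 ≤ V →
      (∑' k : ℕ, if k ≤ V then (0 : ℝ)
        else (2 : ℝ) ^ k.primeFactors.card / ((k : ℝ) ^ 2 * (Nat.totient k)))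
        ≤ C * Real.log V / (V : ℝ) ^ 2 := by
  classical
  use 1000
  intro V hV
  have hV0 : (0:ℝ) < V := by
    have : 0 < V := by omega
    exact_mod_cast this
  have hVR : (2:ℝ) ≤ V := by exact_mod_cast hV
  have hlog2 : (0.6931:ℝ) < Real.log 2 := by
    have := Real.log_two_gt_d9
    linarith
  have hlogV : (0.6931:ℝ) < Real.log V := by
    have := Real.log_le_log (by norm_num : (0:ℝ) < 2) hVR
    linarith
  have hRHS0 : 0 ≤ 1000 * Real.log V / (V : ℝ) ^ 2 := by positivity
  apply tsum_le_of_sum_le' hRHS0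
  intro s
  -- rewrite the finite sum as a sum over the filtered set
  have hsum : ∑ k ∈ s, (if k ≤ V then (0 : ℝ)
      else (2 : ℝ) ^ k.primeFactors.card / ((k : ℝ) ^ 2 * (Nat.totient k))) =
      ∑ k ∈ s.filter (fun k => ¬(k ≤ V)),
        (2 : ℝ) ^ k.primeFactors.card / ((k : ℝ) ^ 2 * (Nat.totient k)) := by
    rw [Finset.sum_filter]
    apply Finset.sum_congr rfl
    intro k _
    by_cases h : k ≤ V <;> simp [h]
  rw [hsum]
  set s' := s.filter (fun k => ¬(k ≤ V)) with hs'
  set N := s'.sup id with hN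
  have hmem : ∀ k ∈ s', k ≠ 0 ∧ k ≤ N ∧ V < k := by
    intro k hk
    have h2 : V < k := by
      have := (Finset.mem_filter.1 hk).2
      omega
    exact ⟨by omega, Finset.le_sup (f := id) hk, h2⟩
  -- step A: pointwise bound
  have stepA : ∑ k ∈ s', (2 : ℝ) ^ k.primeFactors.card / ((k : ℝ) ^ 2 * (Nat.totient k)) ≤
      ∑ k ∈ s', ∑ p ∈ k.divisorsAntidiagonal,
        (w p.1 / (p.1 : ℝ) ^ 3) * ((p.2.divisors.card : ℝ) / (p.2 : ℝ) ^ 3) :=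
    Finset.sum_le_sum fun k hk => pointwise_start (hmem k hk).1
  -- step B: rearrange
  have stepB := rearrange
    (fun a b => (w a / (a : ℝ) ^ 3) * ((b.divisors.card : ℝ) / (b : ℝ) ^ 3))
    (fun a b => by have := w_nonneg a; positivity) (fun k => V < k) s' N
    (fun k hk => ⟨(hmem k hk).2.1, (hmem k hk).2.2⟩)
  -- step C: bound the double sum
  have stepC : ∑ a ∈ Icc 1 N, ∑ b ∈ Icc 1 N,
      (if V < a * b then (w a / (a : ℝ) ^ 3) * ((b.divisors.card : ℝ) / (b : ℝ) ^ 3) else 0) ≤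
      ∑ a ∈ Icc 1 N, (w a / (a : ℝ)) * ((6 + 2 * Real.log V) / (V : ℝ) ^ 2) := by
    apply Finset.sum_le_sum
    intro a ha
    rw [Finset.mem_Icc] at ha
    have ha1 : 1 ≤ a := ha.1
    have haR : (1:ℝ) ≤ a := by exact_mod_cast ha1
    have ha0 : (0:ℝ) < a := by linarith
    have hfac : ∑ b ∈ Icc 1 N,
        (if V < a * b then (w a / (a : ℝ) ^ 3) * ((b.divisors.card : ℝ) / (b : ℝ) ^ 3) else 0) =
        (w a / (a : ℝ) ^ 3) *
          ∑ b ∈ (Icc 1 N).filter (fun b : ℕ => V < a * b),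
            (b.divisors.card : ℝ) / (b : ℝ) ^ 3 := by
      rw [Finset.sum_filter, Finset.mul_sum]
      exact Finset.sum_congr rfl fun b _ => by rw [mul_ite, mul_zero]
    rw [hfac]
    have hsub : (Icc 1 N).filter (fun b : ℕ => V < a * b) ⊆
        (Icc 1 N).filter (fun b : ℕ => (V : ℝ) / (a : ℝ) < (b : ℝ)) := by
      intro b hb
      rw [Finset.mem_filter] at hb ⊢
      refine ⟨hb.1, ?_⟩
      have : (V:ℝ) < (a:ℝ) * (b:ℝ) := by exact_mod_cast hb.2
      rw [div_lt_iff₀ ha0]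
      linarith [this]
    have hinner : ∑ b ∈ (Icc 1 N).filter (fun b : ℕ => V < a * b),
        (b.divisors.card : ℝ) / (b : ℝ) ^ 3 ≤
        (6 + 2 * Real.log V) * ((a : ℝ) ^ 2 / (V : ℝ) ^ 2) := by
      have hyy : (0:ℝ) < (V : ℝ) / (a : ℝ) := by positivity
      calc ∑ b ∈ (Icc 1 N).filter (fun b : ℕ => V < a * b),
            (b.divisors.card : ℝ) / (b : ℝ) ^ 3
          ≤ ∑ b ∈ (Icc 1 N).filter (fun b : ℕ => (V : ℝ) / (a : ℝ) < (b : ℝ)),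
            (b.divisors.card : ℝ) / (b : ℝ) ^ 3 := by
            apply Finset.sum_le_sum_of_subset_of_nonneg hsub
            intro b _ _; positivity
        _ ≤ (6 + 2 * Real.log (max ((V : ℝ) / (a : ℝ)) 1)) / ((V : ℝ) / (a : ℝ)) ^ 2 :=
            tau_tail _ hyy _
        _ ≤ (6 + 2 * Real.log V) * ((a : ℝ) ^ 2 / (V : ℝ) ^ 2) := by
            have hmaxle : max ((V : ℝ) / (a : ℝ)) 1 ≤ (V : ℝ) := by
              apply max_le
              · exact div_le_self (by linarith) haR
              · linarith
            have hmaxpos : (0:ℝ) < max ((V : ℝ) / (a : ℝ)) 1 := by positivity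
            have hloole : Real.log (max ((V : ℝ) / (a : ℝ)) 1) ≤ Real.log V :=
              Real.log_le_log hmaxpos hmaxle
            have hdenom : ((V : ℝ) / (a : ℝ)) ^ 2 = (V : ℝ) ^ 2 / (a : ℝ) ^ 2 := by
              rw [div_pow]
            rw [hdenom, div_div_eq_mul_div, div_le_iff₀ (by positivity)]
            have hnum : 6 + 2 * Real.log (max ((V : ℝ) / (a : ℝ)) 1) ≤
                6 + 2 * Real.log V := by linarith
            calc (6 + 2 * Real.log (max ((V : ℝ) / (a : ℝ)) 1)) * (a : ℝ) ^ 2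
                ≤ (6 + 2 * Real.log V) * (a : ℝ) ^ 2 := by nlinarith [sq_nonneg (a:ℝ)]
              _ = (6 + 2 * Real.log V) * ((a : ℝ) ^ 2 / (V : ℝ) ^ 2) * (V : ℝ) ^ 2 := by
                  field_simp
    calc (w a / (a : ℝ) ^ 3) *
          ∑ b ∈ (Icc 1 N).filter (fun b : ℕ => V < a * b), (b.divisors.card : ℝ) / (b : ℝ) ^ 3
        ≤ (w a / (a : ℝ) ^ 3) * ((6 + 2 * Real.log V) * ((a : ℝ) ^ 2 / (V : ℝ) ^ 2)) := by
          apply mul_le_mul_of_nonneg_left hinner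
          have := w_nonneg a
          positivity
      _ = (w a / (a : ℝ)) * ((6 + 2 * Real.log V) / (V : ℝ) ^ 2) := by
          field_simp
  -- put it together
  have stepD : ∑ a ∈ Icc 1 N, (w a / (a : ℝ)) * ((6 + 2 * Real.log V) / (V : ℝ) ^ 2) ≤
      16 * ((6 + 2 * Real.log V) / (V : ℝ) ^ 2) := by
    rw [← Finset.sum_mul]
    apply mul_le_mul_of_nonneg_right (sum_w_le N)
    have : (0:ℝ) ≤ Real.log V := by linarith
    positivity
  have final : 16 * ((6 + 2 * Real.log V) / (V : ℝ) ^ 2) ≤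
      1000 * Real.log V / (V : ℝ) ^ 2 := by
    have h1 : 16 * ((6 + 2 * Real.log V) / (V : ℝ) ^ 2) =
        (96 + 32 * Real.log V) / (V : ℝ) ^ 2 := by ring
    have h2 : (1000 : ℝ) * Real.log V / (V : ℝ) ^ 2 =
        (1000 * Real.log V) / (V : ℝ) ^ 2 := by ring
    rw [h1, h2]
    apply div_le_div_of_nonneg_right ?_ (by positivity)
    linarith
  calc ∑ k ∈ s', (2 : ℝ) ^ k.primeFactors.card / ((k : ℝ) ^ 2 * (Nat.totient k))
      ≤ _ := stepA
    _ ≤ _ := stepB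
    _ ≤ _ := stepC
    _ ≤ _ := stepD
    _ ≤ _ := final
end

section
/- Let κ be the multiplicative function defined on prime powers by κ(ℓ^e) = ℓ if e is odd and κ(ℓ^e) = 1 if e is even. Then for U ≥ 1, the tail sum Σ_{n > U} 1/(κ(n)·φ(n)) is O(1/√U). -/
open Finset
open scoped ENNReal

/-- The multiplicative function `κ` with `κ(ℓ^e) = ℓ` for odd `e` and `1` for even `e`. -/
def kappa (n : ℕ) : ℕ :=
  ∏ p ∈ n.primeFactors, if Odd (n.factorization p) then p else 1

def sqp (n : ℕ) : ℕ := ∏ p ∈ n.primeFactors, p ^ (n.factorization p / 2)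

lemma kappa_pos (n : ℕ) : 0 < kappa n := by
  apply Finset.prod_pos
  intro p hp
  split
  · exact (Nat.prime_of_mem_primeFactors hp).pos
  · exact one_pos

lemma sqp_pos (n : ℕ) : 0 < sqp n :=
  Finset.prod_pos fun p hp => pow_pos (Nat.prime_of_mem_primeFactors hp).pos _

lemma kappa_mul_sqp_sq {n : ℕ} (hn : n ≠ 0) : kappa n * sqp n ^ 2 = n := by
  rw [kappa, sqp, ← Finset.prod_pow, ← Finset.prod_mul_distrib]
  conv_rhs => rw [← Nat.factorization_prod_pow_eq_self hn]
  rw [Finsupp.prod, Nat.support_factorization]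
  apply Finset.prod_congr rfl
  intro p _
  set e := n.factorization p
  have h1 : (if Odd e then p else 1) = p ^ (e % 2) := by
    rcases Nat.even_or_odd e with he | he
    · simp [Nat.not_odd_iff_even.mpr he, Nat.even_iff.mp he]
    · simp [he, Nat.odd_iff.mp he]
  rw [h1, ← pow_mul, ← pow_add]
  congr 1
  omega

lemma card_divisors_le (n : ℕ) (hn : n ≠ 0) : n.divisors.card ≤ 2 * Nat.sqrt n := by
  classical
  set s := Nat.sqrt n
  have hsplit := Finset.card_filter_add_card_filter_not
    (s := n.divisors) (p := fun d => d ≤ s)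
  have hsmall : (n.divisors.filter (fun d => d ≤ s)).card ≤ s := by
    have : n.divisors.filter (fun d => d ≤ s) ⊆ Finset.Icc 1 s := by
      intro d hd
      simp only [Finset.mem_filter, Nat.mem_divisors] at hd
      exact Finset.mem_Icc.mpr ⟨Nat.pos_of_mem_divisors (Nat.mem_divisors.mpr hd.1), hd.2⟩
    calc _ ≤ (Finset.Icc 1 s).card := Finset.card_le_card this
    _ = s := by rw [Nat.card_Icc]; omega
  have hlarge : (n.divisors.filter (fun d => ¬ d ≤ s)).card ≤ s := by
    have hinj : ∀ d ∈ n.divisors.filter (fun d => ¬ d ≤ s), n / d ∈ Finset.Icc 1 s := by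
      intro d hd
      simp only [Finset.mem_filter, Nat.mem_divisors] at hd
      obtain ⟨⟨hdvd, _⟩, hds⟩ := hd
      have hd1 : s + 1 ≤ d := by omega
      have h2 : n / d ≤ n / (s+1) := Nat.div_le_div_left hd1 (by omega)
      have h3 : n / (s+1) ≤ s := by
        have := Nat.lt_succ_sqrt' n
        have : n / (s+1) < s + 1 := Nat.div_lt_of_lt_mul (by have := Nat.lt_succ_sqrt' n; nlinarith [this])
        omega
      have hpos : 0 < n / d := Nat.div_pos (Nat.le_of_dvd (Nat.pos_of_ne_zero hn) hdvd) (by omega)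
      exact Finset.mem_Icc.mpr ⟨hpos, le_trans h2 h3⟩
    have hinj2 : Set.InjOn (fun d => n / d) (n.divisors.filter (fun d => ¬ d ≤ s)) := by
      intro a ha b hb hab
      simp only [Finset.coe_filter, Set.mem_setOf_eq, Nat.mem_divisors] at ha hb
      have ha' : n / (n / a) = a := Nat.div_div_self ha.1.1 hn
      have hb' : n / (n / b) = b := Nat.div_div_self hb.1.1 hn
      simp only [] at hab
      rw [← ha', hab, hb']
    calc _ ≤ (Finset.Icc 1 s).card := Finset.card_le_card_of_injOn _ hinj hinj2
    _ = s := by rw [Nat.card_Icc]; omega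
  omega

lemma sqrt_le_two_totient (n : ℕ) (hn : 1 ≤ n) : Real.sqrt n ≤ 2 * Nat.totient n := by
  have hφ : 0 < Nat.totient n := Nat.totient_pos.mpr hn
  have h1 : n ≤ Nat.totient n * (2 * Nat.sqrt n) := by
    calc n = ∑ d ∈ n.divisors, Nat.totient d := (Nat.sum_totient n).symm
    _ ≤ ∑ _d ∈ n.divisors, Nat.totient n := by
        apply Finset.sum_le_sum
        intro d hd
        exact Nat.le_of_dvd hφ (Nat.totient_dvd_of_dvd (Nat.mem_divisors.mp hd).1)
    _ = n.divisors.card * Nat.totient n := by rw [Finset.sum_const, smul_eq_mul]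
    _ ≤ (2 * Nat.sqrt n) * Nat.totient n := by
        exact Nat.mul_le_mul_right _ (card_divisors_le n (by omega))
    _ = Nat.totient n * (2 * Nat.sqrt n) := by ring
  have hs : (Nat.sqrt n : ℝ) ≤ Real.sqrt n := by
    rw [show ((Nat.sqrt n : ℕ) : ℝ) = Real.sqrt ((Nat.sqrt n : ℝ)^2) by
      rw [Real.sqrt_sq (by positivity)]]
    apply Real.sqrt_le_sqrt
    exact_mod_cast Nat.sqrt_le' n
  have h2 : (n : ℝ) ≤ Nat.totient n * (2 * Real.sqrt n) := by
    calc (n:ℝ) ≤ (Nat.totient n : ℝ) * (2 * (Nat.sqrt n : ℝ)) := by exact_mod_cast h1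
    _ ≤ _ := by
        apply mul_le_mul_of_nonneg_left _ (by positivity)
        linarith
  have hsq : Real.sqrt n * Real.sqrt n = (n:ℝ) := Real.mul_self_sqrt (by positivity)
  have hspos : 0 < Real.sqrt n := Real.sqrt_pos.mpr (by exact_mod_cast hn)
  nlinarith [hspos]

lemma inv_totient_le (e : ℕ) (he : 1 ≤ e) : ((Nat.totient e : ℝ))⁻¹ ≤ 2 / Real.sqrt e := by
  have h1 : 0 < Real.sqrt e := Real.sqrt_pos.mpr (by exact_mod_cast he)
  have h2 : (0:ℝ) < Nat.totient e := by exact_mod_cast Nat.totient_pos.mpr he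
  rw [inv_eq_one_div, div_le_div_iff₀ h2 h1]
  linarith [sqrt_le_two_totient e he]

lemma ratio_le (m : ℕ) (hm : 1 ≤ m) :
    (m : ℝ) / Nat.totient m ≤ ∑ e ∈ m.divisors, 2 / Real.sqrt e := by
  have hφ : (0:ℝ) < Nat.totient m := by exact_mod_cast Nat.totient_pos.mpr hm
  rw [div_le_iff₀ hφ]
  have h1 : (m : ℝ) = ∑ d ∈ m.divisors, (Nat.totient d : ℝ) := by
    exact_mod_cast (Nat.sum_totient m).symm
  rw [h1]
  have h2 : ∀ d ∈ m.divisors, (Nat.totient d : ℝ) ≤ Nat.totient m / Nat.totient (m / d) := by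
    intro d hd
    obtain ⟨hdvd, _⟩ := Nat.mem_divisors.mp hd
    have hmd : 1 ≤ m / d := Nat.one_le_div_iff (Nat.pos_of_mem_divisors hd) |>.mpr
      (Nat.le_of_dvd (by omega) hdvd)
    have hpos : (0:ℝ) < Nat.totient (m / d) := by
      exact_mod_cast Nat.totient_pos.mpr hmd
    rw [le_div_iff₀ hpos]
    have := Nat.totient_super_multiplicative d (m / d)
    rw [Nat.mul_div_cancel' hdvd] at this
    exact_mod_cast this
  calc ∑ d ∈ m.divisors, (Nat.totient d : ℝ)
      ≤ ∑ d ∈ m.divisors, (Nat.totient m : ℝ) / Nat.totient (m / d) :=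
        Finset.sum_le_sum h2
    _ = ∑ d ∈ m.divisors, (Nat.totient m : ℝ) / Nat.totient d := by
        exact Nat.sum_div_divisors m (fun d => (Nat.totient m : ℝ) / Nat.totient d)
    _ ≤ ∑ d ∈ m.divisors, (Nat.totient m : ℝ) * (2 / Real.sqrt d) := by
        apply Finset.sum_le_sum
        intro d hd
        rw [div_eq_mul_inv]
        exact mul_le_mul_of_nonneg_left (inv_totient_le d (Nat.pos_of_mem_divisors hd)) (by positivity)
    _ = (∑ e ∈ m.divisors, 2 / Real.sqrt e) * Nat.totient m := by
        rw [Finset.sum_mul]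
        exact Finset.sum_congr rfl fun d _ => mul_comm _ _

lemma key_le (k : ℕ) (hk : 1 ≤ k) :
    1 / ((k : ℝ) * Nat.totient k) ≤ ∑ e ∈ k.divisors, 2 / (Real.sqrt e * (k:ℝ)^2) := by
  have hk' : (0:ℝ) < k := by exact_mod_cast hk
  have hφ : (0:ℝ) < Nat.totient k := by exact_mod_cast Nat.totient_pos.mpr hk
  have h1 : 1 / ((k : ℝ) * Nat.totient k) = ((k:ℝ) / Nat.totient k) * (1/(k:ℝ)^2) := by
    field_simp
  rw [h1]
  calc ((k:ℝ) / Nat.totient k) * (1/(k:ℝ)^2)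
      ≤ (∑ e ∈ k.divisors, 2 / Real.sqrt e) * (1/(k:ℝ)^2) :=
        mul_le_mul_of_nonneg_right (ratio_le k hk) (by positivity)
    _ = ∑ e ∈ k.divisors, 2 / (Real.sqrt e * (k:ℝ)^2) := by
        rw [Finset.sum_mul]
        apply Finset.sum_congr rfl
        intro e _
        field_simp

lemma reindex (h : ℕ → ℕ → ℝ≥0∞) :
    (∑' k : ℕ, if 1 ≤ k then (∑ e ∈ k.divisors, h e k) else 0)
      = ∑' p : ℕ × ℕ, h (p.1+1) ((p.1+1)*(p.2+1)) := by
  classical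
  set F : ℕ × ℕ → ℝ≥0∞ := fun q => if 1 ≤ q.1 ∧ q.2 ∈ q.1.divisors then h q.2 q.1 else 0 with hF
  have step1 : (∑' k : ℕ, if 1 ≤ k then (∑ e ∈ k.divisors, h e k) else 0) = ∑' q : ℕ × ℕ, F q := by
    rw [ENNReal.tsum_prod']
    apply tsum_congr
    intro k
    by_cases hk : 1 ≤ k
    · rw [if_pos hk]
      rw [tsum_eq_sum (s := k.divisors) (f := fun e => F (k, e))]
      · exact Finset.sum_congr rfl fun e he => by
          simp only [hF]; rw [if_pos ⟨hk, he⟩]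
      · intro e he
        simp only [hF]
        rw [if_neg]
        intro hc
        exact he hc.2
    · simp only [if_neg hk]
      have : ∀ e : ℕ, F (k, e) = 0 := fun e => by simp [hF, hk]
      simp [this]
  rw [step1]
  set i : ℕ × ℕ → ℕ × ℕ := fun p => ((p.1+1)*(p.2+1), p.1+1) with hi
  have hinj : Function.Injective i := by
    intro p q hpq
    simp only [hi, Prod.mk.injEq] at hpq
    obtain ⟨h1, h2⟩ := hpq
    have hp1 : p.1 = q.1 := by omega
    rw [hp1] at h1
    have : p.2 = q.2 := by
      have := Nat.eq_of_mul_eq_mul_left (show 0 < q.1 + 1 by omega) h1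
      omega
    exact Prod.ext hp1 this
  have hsupp : Function.support F ⊆ Set.range i := by
    intro q hq
    simp only [Function.mem_support, hF] at hq
    by_cases hc : 1 ≤ q.1 ∧ q.2 ∈ q.1.divisors
    · obtain ⟨hk1, hed⟩ := hc
      obtain ⟨hdvd, hne⟩ := Nat.mem_divisors.mp hed
      have he1 : 1 ≤ q.2 := Nat.pos_of_mem_divisors hed
      have hj1 : 1 ≤ q.1 / q.2 := (Nat.one_le_div_iff (by omega)).mpr (Nat.le_of_dvd (by omega) hdvd)
      refine ⟨(q.2 - 1, q.1 / q.2 - 1), ?_⟩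
      simp only [hi]
      have h2 : q.2 - 1 + 1 = q.2 := by omega
      have h3 : q.1 / q.2 - 1 + 1 = q.1 / q.2 := by omega
      rw [h2, h3, Nat.mul_div_cancel' hdvd]
    · exact absurd (if_neg hc) hq
  have := hinj.tsum_eq (f := F) hsupp
  rw [← this]
  apply tsum_congr
  intro p
  have : F (i p) = h (p.1+1) ((p.1+1)*(p.2+1)) := by
    simp only [hF, hi]
    rw [if_pos]
    exact ⟨Nat.succ_le_of_lt (by positivity), Nat.mem_divisors.mpr ⟨⟨p.2+1, rfl⟩, by positivity⟩⟩
  rw [this]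

lemma tail_invsq (x : ℝ) (hx : 0 < x) :
    ∑' b : ℕ, ENNReal.ofReal (if x < (b:ℝ)+1 then (((b:ℝ)+1)^2)⁻¹ else 0)
      ≤ ENNReal.ofReal (2/x) := by
  rw [ENNReal.tsum_eq_iSup_sum]
  apply iSup_le
  intro s
  rw [← ENNReal.ofReal_sum_of_nonneg (fun b _ => by positivity)]
  apply ENNReal.ofReal_le_ofReal
  classical
  rw [Finset.sum_ite, Finset.sum_const, smul_zero, add_zero]
  set Q := s.filter (fun b : ℕ => x < (b:ℝ)+1) with hQ
  have himg : ∑ b ∈ Q, (((b:ℝ)+1)^2)⁻¹ = ∑ i ∈ Q.image (fun b : ℕ => b + 1), (((i:ℝ))^2)⁻¹ := by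
    rw [Finset.sum_image (fun a _ b _ h => by omega)]
    apply Finset.sum_congr rfl
    intro b _
    push_cast
    ring
  rw [himg]
  set N : ℕ := (Q.image (fun b : ℕ => b + 1)).sup id + 1 with hN
  have hsub : Q.image (fun b : ℕ => b + 1) ⊆ Finset.Ioo (Nat.floor x) N := by
    intro i hi
    obtain ⟨b, hb, rfl⟩ := Finset.mem_image.mp hi
    have hxb : x < (b:ℝ)+1 := (Finset.mem_filter.mp hb).2
    refine Finset.mem_Ioo.mpr ⟨?_, ?_⟩
    · have h1 : (Nat.floor x : ℝ) ≤ x := Nat.floor_le hx.le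
      have : (Nat.floor x : ℝ) < ((b+1 : ℕ) : ℝ) := by push_cast; linarith
      exact_mod_cast this
    · have : b + 1 ≤ (Q.image (fun b : ℕ => b + 1)).sup id := Finset.le_sup (f := id) hi
      omega
  calc ∑ i ∈ Q.image (fun b : ℕ => b + 1), (((i:ℝ))^2)⁻¹
      ≤ ∑ i ∈ Finset.Ioo (Nat.floor x) N, (((i:ℝ))^2)⁻¹ :=
        Finset.sum_le_sum_of_subset_of_nonneg hsub (fun i _ _ => by positivity)
    _ ≤ 2 / ((Nat.floor x : ℝ) + 1) := by exact_mod_cast sum_Ioo_inv_sq_le (α := ℝ) (Nat.floor x) N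
    _ ≤ 2 / x := by
        apply div_le_div_of_nonneg_left (by norm_num) hx
        linarith [Nat.lt_floor_add_one x]

lemma count_le (M : ℝ) (hM : 0 ≤ M) (c : ℕ) (hc : 1 ≤ c) :
    ∑' b : ℕ, ENNReal.ofReal (if (c:ℝ) * ((b:ℝ)+1) ≤ M then (1:ℝ) else 0)
      ≤ ENNReal.ofReal (M / c) := by
  rw [ENNReal.tsum_eq_iSup_sum]
  apply iSup_le
  intro s
  rw [← ENNReal.ofReal_sum_of_nonneg (fun b _ => by positivity)]
  apply ENNReal.ofReal_le_ofReal
  classical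
  rw [Finset.sum_boole]
  have hc' : (0:ℝ) < c := by exact_mod_cast hc
  have hsub : s.filter (fun b : ℕ => (c:ℝ) * ((b:ℝ)+1) ≤ M) ⊆ Finset.range (Nat.floor (M / c)) := by
    intro b hb
    obtain ⟨_, hbc⟩ := Finset.mem_filter.mp hb
    have h1 : ((b:ℝ)+1) ≤ M / c := by
      rw [le_div_iff₀ hc']; linarith [hbc]
    have h2 : (b:ℕ)+1 ≤ Nat.floor (M / c) := by
      apply Nat.le_floor
      exact_mod_cast h1
    exact Finset.mem_range.mpr (by omega)
  calc ((s.filter (fun b : ℕ => (c:ℝ) * ((b:ℝ)+1) ≤ M)).card : ℝ)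
      ≤ ((Finset.range (Nat.floor (M / c))).card : ℝ) := by
        exact_mod_cast Finset.card_le_card hsub
    _ = (Nat.floor (M / c) : ℝ) := by rw [Finset.card_range]
    _ ≤ M / c := Nat.floor_le (by positivity)

noncomputable def Zf : ℕ → ℝ := fun a => 1 / (((a:ℝ)+1) * Real.sqrt ((a:ℝ)+1))

lemma Zf_nonneg (a : ℕ) : 0 ≤ Zf a := by rw [Zf]; positivity

lemma Zf_eq (a : ℕ) : Zf a = 1 / ((a+1:ℕ):ℝ) ^ ((3:ℝ)/2) := by
  rw [Zf]
  push_cast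
  rw [show ((3:ℝ)/2) = 1 + 1/2 by norm_num, Real.rpow_add (by positivity), Real.rpow_one,
    ← Real.sqrt_eq_rpow]

lemma Zf_summable : Summable Zf := by
  have h := Real.summable_one_div_nat_rpow.mpr (show (1:ℝ) < 3/2 by norm_num)
  have h2 := h.comp_injective (add_left_injective 1)
  apply h2.congr
  intro a
  rw [Zf_eq]
  rfl

noncomputable def Zc : ℝ := ∑' a, Zf a

lemma Zc_nonneg : 0 ≤ Zc := tsum_nonneg Zf_nonneg

lemma tsum_ofReal_Zf : ∑' a : ℕ, ENNReal.ofReal (Zf a) = ENNReal.ofReal Zc :=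
  (ENNReal.ofReal_tsum_of_nonneg Zf_nonneg Zf_summable).symm

noncomputable def EA (k : ℕ) : ℝ≥0∞ := ENNReal.ofReal (1/((k:ℝ) * (Nat.totient k : ℝ)))

lemma tailA (T : ℝ) (hT : 0 < T) :
    ∑' k : ℕ, (if T < (k:ℝ) then EA k else 0) ≤ ENNReal.ofReal ((4*Zc)/T) := by
  set h : ℕ → ℕ → ℝ≥0∞ :=
    fun e k => ENNReal.ofReal (if T < (k:ℝ) then 2/(Real.sqrt e * (k:ℝ)^2) else 0) with hh
  have step1 : ∑' k : ℕ, (if T < (k:ℝ) then EA k else 0)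
      ≤ ∑' k : ℕ, (if 1 ≤ k then (∑ e ∈ k.divisors, h e k) else 0) := by
    apply ENNReal.tsum_le_tsum
    intro k
    by_cases hk : 1 ≤ k
    · rw [if_pos hk]
      by_cases hTk : T < (k:ℝ)
      · rw [if_pos hTk, EA]
        calc ENNReal.ofReal (1/((k:ℝ) * (Nat.totient k : ℝ)))
            ≤ ENNReal.ofReal (∑ e ∈ k.divisors, 2 / (Real.sqrt e * (k:ℝ)^2)) :=
              ENNReal.ofReal_le_ofReal (key_le k hk)
          _ = ∑ e ∈ k.divisors, ENNReal.ofReal (2 / (Real.sqrt e * (k:ℝ)^2)) :=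
              ENNReal.ofReal_sum_of_nonneg (fun e _ => by positivity)
          _ = ∑ e ∈ k.divisors, h e k := by
              apply Finset.sum_congr rfl
              intro e _
              rw [hh]
              simp only [if_pos hTk]
          _ ≤ ∑' (e : ℕ), if e ∈ k.divisors then h e k else 0 := by
              rw [tsum_eq_sum (s := k.divisors) (f := fun e => if e ∈ k.divisors then h e k else 0)
                (fun e he => if_neg he)]
              exact le_of_eq (Finset.sum_congr rfl fun e he => (if_pos he).symm)
          _ = ∑ e ∈ k.divisors, h e k := by
              rw [tsum_eq_sum (s := k.divisors) (fun e he => if_neg he)]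
              exact Finset.sum_congr rfl fun e he => if_pos he
      · rw [if_neg hTk]; exact zero_le
    · have hk0 : k = 0 := by omega
      rw [if_neg hk, hk0]
      norm_num
      intro h0
      linarith
  have step2 : (∑' k : ℕ, if 1 ≤ k then (∑ e ∈ k.divisors, h e k) else 0)
      = ∑' p : ℕ × ℕ, h (p.1+1) ((p.1+1)*(p.2+1)) := reindex h
  have step3 : ∑' p : ℕ × ℕ, h (p.1+1) ((p.1+1)*(p.2+1))
      = ∑' a : ℕ, ∑' b : ℕ, h (a+1) ((a+1)*(b+1)) := ENNReal.tsum_prod'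
  have step4 : ∀ a : ℕ, ∑' b : ℕ, h (a+1) ((a+1)*(b+1))
      ≤ ENNReal.ofReal ((4/T) * Zf a) := by
    intro a
    have ha : (0:ℝ) < (a:ℝ)+1 := by positivity
    have hterm : ∀ b : ℕ, h (a+1) ((a+1)*(b+1))
        = ENNReal.ofReal (2/(Real.sqrt ((a:ℝ)+1) * ((a:ℝ)+1)^2))
          * ENNReal.ofReal (if T/((a:ℝ)+1) < (b:ℝ)+1 then (((b:ℝ)+1)^2)⁻¹ else 0) := by
      intro b
      simp only [hh]
      rw [← ENNReal.ofReal_mul (by positivity)]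
      congr 1
      have hcast : (((a+1)*(b+1) : ℕ) : ℝ) = ((a:ℝ)+1) * ((b:ℝ)+1) := by push_cast; ring
      have hcast2 : Real.sqrt ((a+1 : ℕ) : ℝ) = Real.sqrt ((a:ℝ)+1) := by push_cast; rfl
      have hcond : (T < ((a:ℝ)+1) * ((b:ℝ)+1)) ↔ (T/((a:ℝ)+1) < (b:ℝ)+1) := by
        rw [div_lt_iff₀ ha, mul_comm]
      rw [hcast, hcast2]
      by_cases hc : T/((a:ℝ)+1) < (b:ℝ)+1
      · rw [if_pos hc, if_pos (hcond.mpr hc)]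
        have hb : (0:ℝ) < (b:ℝ)+1 := by positivity
        field_simp
      · rw [if_neg hc, if_neg (fun hcc => hc (hcond.mp hcc)), mul_zero]
    calc ∑' b : ℕ, h (a+1) ((a+1)*(b+1))
        = ENNReal.ofReal (2/(Real.sqrt ((a:ℝ)+1) * ((a:ℝ)+1)^2))
          * ∑' b : ℕ, ENNReal.ofReal (if T/((a:ℝ)+1) < (b:ℝ)+1 then (((b:ℝ)+1)^2)⁻¹ else 0) := by
          rw [← ENNReal.tsum_mul_left]
          exact tsum_congr hterm
      _ ≤ ENNReal.ofReal (2/(Real.sqrt ((a:ℝ)+1) * ((a:ℝ)+1)^2))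
          * ENNReal.ofReal (2/(T/((a:ℝ)+1))) := by
          apply mul_le_mul_right
          exact tail_invsq _ (by positivity)
      _ = ENNReal.ofReal ((4/T) * Zf a) := by
          rw [← ENNReal.ofReal_mul (by positivity)]
          congr 1
          rw [Zf]
          have hs : (0:ℝ) < Real.sqrt ((a:ℝ)+1) := Real.sqrt_pos.mpr ha
          field_simp
          ring
  have step5 : ∑' a : ℕ, ENNReal.ofReal ((4/T) * Zf a) = ENNReal.ofReal ((4*Zc)/T) := by
    calc ∑' a : ℕ, ENNReal.ofReal ((4/T) * Zf a)
        = ∑' a : ℕ, ENNReal.ofReal (4/T) * ENNReal.ofReal (Zf a) := by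
          exact tsum_congr fun a => ENNReal.ofReal_mul (by positivity)
      _ = ENNReal.ofReal (4/T) * ENNReal.ofReal Zc := by
          rw [ENNReal.tsum_mul_left, tsum_ofReal_Zf]
      _ = ENNReal.ofReal ((4*Zc)/T) := by
          rw [← ENNReal.ofReal_mul (by positivity)]
          congr 1
          field_simp
  calc ∑' k : ℕ, (if T < (k:ℝ) then EA k else 0)
      ≤ ∑' k : ℕ, (if 1 ≤ k then (∑ e ∈ k.divisors, h e k) else 0) := step1
    _ = ∑' a : ℕ, ∑' b : ℕ, h (a+1) ((a+1)*(b+1)) := by rw [step2, step3]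
    _ ≤ ∑' a : ℕ, ENNReal.ofReal ((4/T) * Zf a) := ENNReal.tsum_le_tsum step4
    _ = ENNReal.ofReal ((4*Zc)/T) := step5

lemma sum_ratio_le (M : ℝ) (hM : 0 ≤ M) :
    ∑' m : ℕ, ENNReal.ofReal (if 1 ≤ m ∧ (m:ℝ) ≤ M then (m:ℝ)/(Nat.totient m) else 0)
      ≤ ENNReal.ofReal (2*Zc*M) := by
  set h : ℕ → ℕ → ℝ≥0∞ :=
    fun e k => ENNReal.ofReal (if (k:ℝ) ≤ M then 2/Real.sqrt e else 0) with hh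
  have step1 : ∑' m : ℕ, ENNReal.ofReal (if 1 ≤ m ∧ (m:ℝ) ≤ M then (m:ℝ)/(Nat.totient m) else 0)
      ≤ ∑' k : ℕ, (if 1 ≤ k then (∑ e ∈ k.divisors, h e k) else 0) := by
    apply ENNReal.tsum_le_tsum
    intro k
    by_cases hk : 1 ≤ k
    · rw [if_pos hk]
      by_cases hkM : (k:ℝ) ≤ M
      · rw [if_pos ⟨hk, hkM⟩]
        calc ENNReal.ofReal ((k:ℝ)/(Nat.totient k))
            ≤ ENNReal.ofReal (∑ e ∈ k.divisors, 2 / Real.sqrt e) :=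
              ENNReal.ofReal_le_ofReal (ratio_le k hk)
          _ = ∑ e ∈ k.divisors, ENNReal.ofReal (2 / Real.sqrt e) :=
              ENNReal.ofReal_sum_of_nonneg (fun e _ => by positivity)
          _ = ∑ e ∈ k.divisors, h e k := by
              apply Finset.sum_congr rfl
              intro e _
              simp only [hh]
              rw [if_pos hkM]
      · rw [if_neg (fun hc : 1 ≤ k ∧ (k:ℝ) ≤ M => hkM hc.2), ENNReal.ofReal_zero]
        exact zero_le
    · rw [if_neg (fun hc : 1 ≤ k ∧ (k:ℝ) ≤ M => hk hc.1), if_neg hk, ENNReal.ofReal_zero]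
  have step2 := reindex h
  have step4 : ∀ a : ℕ, ∑' b : ℕ, h (a+1) ((a+1)*(b+1))
      ≤ ENNReal.ofReal ((2*M) * Zf a) := by
    intro a
    have ha : (0:ℝ) < (a:ℝ)+1 := by positivity
    have hterm : ∀ b : ℕ, h (a+1) ((a+1)*(b+1))
        = ENNReal.ofReal (2/Real.sqrt ((a:ℝ)+1))
          * ENNReal.ofReal (if ((a+1:ℕ):ℝ) * ((b:ℝ)+1) ≤ M then (1:ℝ) else 0) := by
      intro b
      simp only [hh]
      rw [← ENNReal.ofReal_mul (by positivity)]
      congr 1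
      have hcast : (((a+1)*(b+1) : ℕ) : ℝ) = ((a+1:ℕ):ℝ) * ((b:ℝ)+1) := by push_cast; ring
      have hcast2 : Real.sqrt ((a+1 : ℕ) : ℝ) = Real.sqrt ((a:ℝ)+1) := by push_cast; rfl
      rw [hcast, hcast2]
      by_cases hc : ((a+1:ℕ):ℝ) * ((b:ℝ)+1) ≤ M
      · rw [if_pos hc, if_pos hc, mul_one]
      · rw [if_neg hc, if_neg hc, mul_zero]
    calc ∑' b : ℕ, h (a+1) ((a+1)*(b+1))
        = ENNReal.ofReal (2/Real.sqrt ((a:ℝ)+1))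
          * ∑' b : ℕ, ENNReal.ofReal (if ((a+1:ℕ):ℝ) * ((b:ℝ)+1) ≤ M then (1:ℝ) else 0) := by
          rw [← ENNReal.tsum_mul_left]
          exact tsum_congr hterm
      _ ≤ ENNReal.ofReal (2/Real.sqrt ((a:ℝ)+1)) * ENNReal.ofReal (M / ((a+1:ℕ):ℝ)) := by
          apply mul_le_mul_right
          exact count_le M hM (a+1) (by omega)
      _ = ENNReal.ofReal ((2*M) * Zf a) := by
          rw [← ENNReal.ofReal_mul (by positivity)]
          congr 1
          have hcast : ((a+1:ℕ):ℝ) = (a:ℝ)+1 := by push_cast; ring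
          simp only [Zf, hcast]
          rw [div_mul_div_comm, mul_one_div, mul_comm (Real.sqrt ((a:ℝ)+1)) ((a:ℝ)+1)]
  have step5 : ∑' a : ℕ, ENNReal.ofReal ((2*M) * Zf a) = ENNReal.ofReal (2*Zc*M) := by
    calc ∑' a : ℕ, ENNReal.ofReal ((2*M) * Zf a)
        = ∑' a : ℕ, ENNReal.ofReal (2*M) * ENNReal.ofReal (Zf a) :=
          tsum_congr fun a => ENNReal.ofReal_mul (by positivity)
      _ = ENNReal.ofReal (2*M) * ENNReal.ofReal Zc := by
          rw [ENNReal.tsum_mul_left, tsum_ofReal_Zf]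
      _ = ENNReal.ofReal (2*Zc*M) := by
          rw [← ENNReal.ofReal_mul (by positivity)]
          congr 1
          ring
  calc ∑' m : ℕ, ENNReal.ofReal (if 1 ≤ m ∧ (m:ℝ) ≤ M then (m:ℝ)/(Nat.totient m) else 0)
      ≤ ∑' k : ℕ, (if 1 ≤ k then (∑ e ∈ k.divisors, h e k) else 0) := step1
    _ = ∑' a : ℕ, ∑' b : ℕ, h (a+1) ((a+1)*(b+1)) := by rw [step2]; exact ENNReal.tsum_prod'
    _ ≤ ∑' a : ℕ, ENNReal.ofReal ((2*M) * Zf a) := ENNReal.tsum_le_tsum step4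
    _ = ENNReal.ofReal (2*Zc*M) := step5

def imap : ℕ → ℕ × ℕ := fun n => if n = 0 then (0,0) else (kappa n, sqp n)

lemma imap_inj : Function.Injective imap := by
  intro a b hab
  unfold imap at hab
  by_cases ha : a = 0 <;> by_cases hb : b = 0
  · omega
  · rw [if_pos ha, if_neg hb] at hab
    exact absurd (congrArg Prod.fst hab).symm (by simpa using (kappa_pos b).ne')
  · rw [if_neg ha, if_pos hb] at hab
    exact absurd (congrArg Prod.fst hab) (by simpa using (kappa_pos a).ne')
  · rw [if_neg ha, if_neg hb] at hab
    have h1 : kappa a = kappa b := congrArg Prod.fst hab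
    have h2 : sqp a = sqp b := congrArg Prod.snd hab
    have := kappa_mul_sqp_sq ha
    rw [h1, h2, kappa_mul_sqp_sq hb] at this
    exact this.symm

lemma totient_sq_eq (m : ℕ) (hm : 1 ≤ m) :
    Nat.totient (m * m) = Nat.totient m * m := by
  have h := Nat.totient_gcd_mul_totient_mul m m
  rw [Nat.gcd_self] at h
  have hφ : 0 < Nat.totient m := Nat.totient_pos.mpr hm
  have : Nat.totient m * Nat.totient (m*m) = Nat.totient m * (Nat.totient m * m) := by
    rw [h]; ring
  exact Nat.eq_of_mul_eq_mul_left hφ this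

lemma pointwise_le (U n : ℕ) (hU : 1 ≤ U) :
    ENNReal.ofReal (if n ≤ U then (0:ℝ) else 1/((kappa n : ℝ) * (Nat.totient n)))
      ≤ (fun p : ℕ × ℕ => if (U:ℝ) < (p.1:ℝ) * (p.2:ℝ)^2 then EA p.1 * EA p.2 else 0)
        (imap n) := by
  by_cases hn : n ≤ U
  · rw [if_pos hn, ENNReal.ofReal_zero]; exact zero_le
  · rw [if_neg hn]
    push_neg at hn
    have hn0 : n ≠ 0 := by omega
    have himap : imap n = (kappa n, sqp n) := if_neg hn0
    rw [himap]
    set s := kappa n with hs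
    set m := sqp n with hm
    have hsm : s * m^2 = n := kappa_mul_sqp_sq hn0
    have hcond : (U:ℝ) < (s:ℝ) * (m:ℝ)^2 := by
      have : ((s * m^2 : ℕ):ℝ) = (s:ℝ) * (m:ℝ)^2 := by push_cast; ring
      rw [← this, hsm]
      exact_mod_cast hn
    simp only
    rw [if_pos hcond, EA, EA, ← ENNReal.ofReal_mul (by positivity)]
    apply ENNReal.ofReal_le_ofReal
    have hs1 : 1 ≤ s := kappa_pos n
    have hm1 : 1 ≤ m := sqp_pos n
    have hn1 : 1 ≤ n := by omega
    have hkey : s * Nat.totient s * (m * Nat.totient m) ≤ kappa n * Nat.totient n := by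
      rw [← hs]
      have h1 : Nat.totient s * Nat.totient (m*m) ≤ Nat.totient (s * (m*m)) :=
        Nat.totient_super_multiplicative s (m*m)
      rw [totient_sq_eq m hm1] at h1
      have h2 : s * (m*m) = n := by rw [← hsm]; ring
      rw [h2] at h1
      calc s * Nat.totient s * (m * Nat.totient m)
          = s * (Nat.totient s * (Nat.totient m * m)) := by ring
        _ ≤ s * Nat.totient n := Nat.mul_le_mul_left s h1
    have hpos : (0:ℝ) < (s:ℝ) * Nat.totient s * ((m:ℝ) * Nat.totient m) := by
      have := Nat.totient_pos.mpr hs1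
      have := Nat.totient_pos.mpr hm1
      positivity
    rw [div_mul_div_comm, one_mul]
    apply one_div_le_one_div_of_le hpos
    calc (s:ℝ) * Nat.totient s * ((m:ℝ) * Nat.totient m)
        = ((s * Nat.totient s * (m * Nat.totient m) : ℕ) : ℝ) := by push_cast; ring
      _ ≤ ((kappa n * Nat.totient n : ℕ) : ℝ) := by exact_mod_cast hkey
      _ = (kappa n : ℝ) * Nat.totient n := by push_cast; ring

lemma EA_zero : EA 0 = 0 := by
  rw [EA]
  norm_num

lemma tsum_EA_le : ∑' k : ℕ, EA k ≤ ENNReal.ofReal (8*Zc) := by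
  have h1 : ∀ k : ℕ, EA k = if (1:ℝ)/2 < (k:ℝ) then EA k else 0 := by
    intro k
    by_cases hk : (1:ℝ)/2 < (k:ℝ)
    · rw [if_pos hk]
    · rw [if_neg hk]
      have : k = 0 := by
        by_contra hk0
        have : 1 ≤ k := by omega
        apply hk
        have : (1:ℝ) ≤ (k:ℝ) := by exact_mod_cast this
        linarith
      rw [this, EA_zero]
  calc ∑' k : ℕ, EA k = ∑' k : ℕ, (if (1:ℝ)/2 < (k:ℝ) then EA k else 0) := tsum_congr h1
    _ ≤ ENNReal.ofReal ((4*Zc)/((1:ℝ)/2)) := tailA ((1:ℝ)/2) (by norm_num)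
    _ = ENNReal.ofReal (8*Zc) := by congr 1; ring

theorem main_bound (U : ℕ) (hU : 1 ≤ U) :
    ∑' p : ℕ × ℕ, (if (U:ℝ) < (p.1:ℝ) * (p.2:ℝ)^2 then EA p.1 * EA p.2 else 0)
      ≤ ENNReal.ofReal ((40 * Zc^2) / Real.sqrt U) := by
  have hU1 : (1:ℝ) ≤ (U:ℝ) := by exact_mod_cast hU
  have hsU : 0 < Real.sqrt U := Real.sqrt_pos.mpr (by linarith)
  set g1 : ℕ × ℕ → ℝ≥0∞ := fun p =>
    if 1 ≤ p.2 ∧ (p.2:ℝ) ≤ Real.sqrt U ∧ (U:ℝ) < (p.1:ℝ) * (p.2:ℝ)^2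
      then EA p.1 * EA p.2 else 0 with hg1
  set g2 : ℕ × ℕ → ℝ≥0∞ := fun p =>
    if Real.sqrt U < (p.2:ℝ) then EA p.1 * EA p.2 else 0 with hg2
  have hsplit : ∀ p : ℕ × ℕ, (if (U:ℝ) < (p.1:ℝ) * (p.2:ℝ)^2 then EA p.1 * EA p.2 else 0)
      ≤ g1 p + g2 p := by
    intro p
    by_cases hc : (U:ℝ) < (p.1:ℝ) * (p.2:ℝ)^2
    · rw [if_pos hc]
      have hm1 : 1 ≤ p.2 := by
        by_contra hm
        have : p.2 = 0 := by omega
        rw [this] at hc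
        push_cast at hc
        nlinarith
      rcases le_or_gt ((p.2:ℝ)) (Real.sqrt U) with hle | hlt
      · calc EA p.1 * EA p.2 = g1 p := by rw [hg1]; simp only; rw [if_pos ⟨hm1, hle, hc⟩]
          _ ≤ g1 p + g2 p := le_self_add
      · calc EA p.1 * EA p.2 = g2 p := by rw [hg2]; simp only; rw [if_pos hlt]
          _ ≤ g1 p + g2 p := le_add_self
    · rw [if_neg hc]
      exact zero_le
  have hS2 : ∑' p : ℕ × ℕ, g2 p ≤ ENNReal.ofReal ((32 * Zc^2) / Real.sqrt U) := by
    calc ∑' p : ℕ × ℕ, g2 p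
        = ∑' s : ℕ, ∑' m : ℕ, (if Real.sqrt U < (m:ℝ) then EA s * EA m else 0) :=
          ENNReal.tsum_prod'
      _ = ∑' s : ℕ, EA s * ∑' m : ℕ, (if Real.sqrt U < (m:ℝ) then EA m else 0) := by
          apply tsum_congr
          intro s
          rw [← ENNReal.tsum_mul_left]
          apply tsum_congr
          intro m
          by_cases hc : Real.sqrt U < (m:ℝ)
          · rw [if_pos hc, if_pos hc]
          · rw [if_neg hc, if_neg hc, mul_zero]
      _ = (∑' s : ℕ, EA s) * ∑' m : ℕ, (if Real.sqrt U < (m:ℝ) then EA m else 0) :=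
          ENNReal.tsum_mul_right
      _ ≤ ENNReal.ofReal (8*Zc) * ENNReal.ofReal ((4*Zc)/Real.sqrt U) :=
          mul_le_mul' tsum_EA_le (tailA _ hsU)
      _ = ENNReal.ofReal ((32 * Zc^2) / Real.sqrt U) := by
          rw [← ENNReal.ofReal_mul (by linarith [Zc_nonneg])]
          congr 1
          field_simp
          ring
  have hS1 : ∑' p : ℕ × ℕ, g1 p ≤ ENNReal.ofReal ((8 * Zc^2) / Real.sqrt U) := by
    have hswap : ∑' p : ℕ × ℕ, g1 p = ∑' m : ℕ, ∑' s : ℕ, g1 (s, m) := by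
      rw [ENNReal.tsum_prod']
      exact ENNReal.tsum_comm
    rw [hswap]
    have hinner : ∀ m : ℕ, ∑' s : ℕ, g1 (s, m)
        ≤ ENNReal.ofReal (if 1 ≤ m ∧ (m:ℝ) ≤ Real.sqrt U
            then ((4*Zc)/(U:ℝ)) * ((m:ℝ)/(Nat.totient m)) else 0) := by
      intro m
      by_cases hm : 1 ≤ m ∧ (m:ℝ) ≤ Real.sqrt U
      · rw [if_pos hm]
        obtain ⟨hm1, hmU⟩ := hm
        have hmpos : (0:ℝ) < (m:ℝ)^2 := by
          have : (1:ℝ) ≤ (m:ℝ) := by exact_mod_cast hm1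
          positivity
        have hT : (0:ℝ) < (U:ℝ)/(m:ℝ)^2 := by positivity
        calc ∑' s : ℕ, g1 (s, m)
            = ∑' s : ℕ, (if (U:ℝ)/(m:ℝ)^2 < (s:ℝ) then EA s else 0) * EA m := by
              apply tsum_congr
              intro s
              rw [hg1]
              simp only
              have hcond : ((U:ℝ) < (s:ℝ) * (m:ℝ)^2) ↔ ((U:ℝ)/(m:ℝ)^2 < (s:ℝ)) :=
                (div_lt_iff₀ hmpos).symm
              by_cases hc : (U:ℝ)/(m:ℝ)^2 < (s:ℝ)
              · rw [if_pos ⟨hm1, hmU, hcond.mpr hc⟩, if_pos hc]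
              · rw [if_neg (fun hcc => hc (hcond.mp hcc.2.2)), if_neg hc, zero_mul]
          _ = (∑' s : ℕ, (if (U:ℝ)/(m:ℝ)^2 < (s:ℝ) then EA s else 0)) * EA m :=
              ENNReal.tsum_mul_right
          _ ≤ ENNReal.ofReal ((4*Zc)/((U:ℝ)/(m:ℝ)^2)) * EA m :=
              mul_le_mul_left (tailA _ hT) _
          _ = ENNReal.ofReal (((4*Zc)/(U:ℝ)) * ((m:ℝ)/(Nat.totient m))) := by
              rw [EA, ← ENNReal.ofReal_mul
                (div_nonneg (by linarith [Zc_nonneg]) (by positivity))]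
              congr 1
              rw [div_div_eq_mul_div]
              have hφ : (0:ℝ) < (Nat.totient m : ℝ) := by
                exact_mod_cast Nat.totient_pos.mpr hm1
              have hm' : (0:ℝ) < (m:ℝ) := by exact_mod_cast hm1
              field_simp
      · rw [if_neg hm, ENNReal.ofReal_zero]
        have : ∀ s : ℕ, g1 (s, m) = 0 := by
          intro s
          rw [hg1]
          simp only
          rw [if_neg]
          intro hcc
          exact hm ⟨hcc.1, hcc.2.1⟩
        simp [this]
    calc ∑' m : ℕ, ∑' s : ℕ, g1 (s, m)
        ≤ ∑' m : ℕ, ENNReal.ofReal (if 1 ≤ m ∧ (m:ℝ) ≤ Real.sqrt U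
            then ((4*Zc)/(U:ℝ)) * ((m:ℝ)/(Nat.totient m)) else 0) :=
          ENNReal.tsum_le_tsum hinner
      _ = ENNReal.ofReal ((4*Zc)/(U:ℝ))
          * ∑' m : ℕ, ENNReal.ofReal (if 1 ≤ m ∧ (m:ℝ) ≤ Real.sqrt U
              then (m:ℝ)/(Nat.totient m) else 0) := by
          rw [← ENNReal.tsum_mul_left]
          apply tsum_congr
          intro m
          rw [← ENNReal.ofReal_mul (div_nonneg (by linarith [Zc_nonneg]) (by positivity))]
          congr 1
          by_cases hc : 1 ≤ m ∧ (m:ℝ) ≤ Real.sqrt U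
          · rw [if_pos hc, if_pos hc]
          · rw [if_neg hc, if_neg hc, mul_zero]
      _ ≤ ENNReal.ofReal ((4*Zc)/(U:ℝ)) * ENNReal.ofReal (2*Zc*Real.sqrt U) :=
          mul_le_mul_right (sum_ratio_le _ hsU.le) _
      _ = ENNReal.ofReal ((8 * Zc^2) / Real.sqrt U) := by
          rw [← ENNReal.ofReal_mul (div_nonneg (by linarith [Zc_nonneg]) (by positivity))]
          congr 1
          have hUsq : Real.sqrt U * Real.sqrt U = (U:ℝ) := Real.mul_self_sqrt (by linarith)
          field_simp
          nlinarith [hUsq, hsU, Zc_nonneg]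
  calc ∑' p : ℕ × ℕ, (if (U:ℝ) < (p.1:ℝ) * (p.2:ℝ)^2 then EA p.1 * EA p.2 else 0)
      ≤ ∑' p : ℕ × ℕ, (g1 p + g2 p) := ENNReal.tsum_le_tsum hsplit
    _ = (∑' p : ℕ × ℕ, g1 p) + ∑' p : ℕ × ℕ, g2 p := ENNReal.tsum_add
    _ ≤ ENNReal.ofReal ((8 * Zc^2) / Real.sqrt U) + ENNReal.ofReal ((32 * Zc^2) / Real.sqrt U) :=
        add_le_add hS1 hS2
    _ = ENNReal.ofReal ((40 * Zc^2) / Real.sqrt U) := by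
        rw [← ENNReal.ofReal_add (by positivity) (by positivity)]
        congr 1
        field_simp
        ring

/-- `Σ_{n > U} 1/(κ(n)·φ(n)) = O(1/√U)` for `U ≥ 1`. -/
theorem stmt4 :
    ∃ C : ℝ, ∀ U : ℕ, 1 ≤ U →
      (∑' n : ℕ, if n ≤ U then (0 : ℝ)
        else 1 / ((kappa n : ℝ) * (Nat.totient n)))
        ≤ C / Real.sqrt U := by
  refine ⟨40 * Zc^2, ?_⟩
  intro U hU
  have hU1 : (1:ℝ) ≤ (U:ℝ) := by exact_mod_cast hU
  have hsU : 0 < Real.sqrt U := Real.sqrt_pos.mpr (by linarith)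
  set f : ℕ → ℝ := fun n => if n ≤ U then (0:ℝ) else 1/((kappa n : ℝ) * (Nat.totient n)) with hf
  have hfnn : ∀ n, 0 ≤ f n := by
    intro n
    rw [hf]
    simp only
    split
    · exact le_refl 0
    · positivity
  by_cases hsum : Summable f
  · have h0 : ENNReal.ofReal (∑' n, f n) = ∑' n, ENNReal.ofReal (f n) :=
      ENNReal.ofReal_tsum_of_nonneg hfnn hsum
    have hchain : ∑' n : ℕ, ENNReal.ofReal (f n)
        ≤ ENNReal.ofReal ((40 * Zc^2) / Real.sqrt U) := by
      calc ∑' n : ℕ, ENNReal.ofReal (f n)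
          ≤ ∑' n : ℕ, (fun p : ℕ × ℕ =>
              if (U:ℝ) < (p.1:ℝ) * (p.2:ℝ)^2 then EA p.1 * EA p.2 else 0) (imap n) :=
            ENNReal.tsum_le_tsum (fun n => pointwise_le U n hU)
        _ ≤ ∑' p : ℕ × ℕ, (if (U:ℝ) < (p.1:ℝ) * (p.2:ℝ)^2 then EA p.1 * EA p.2 else 0) :=
            ENNReal.tsum_comp_le_tsum_of_injective imap_inj _
        _ ≤ ENNReal.ofReal ((40 * Zc^2) / Real.sqrt U) := main_bound U hU
    rw [← h0] at hchain
    exact (ENNReal.ofReal_le_ofReal_iff (by positivity)).mp hchain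
  · rw [tsum_eq_zero_of_not_summable hsum]
    positivity
end

section
/- Fix an integer N ≥ 1 and let κ_N be the multiplicative function with κ_N(ℓ^e) = ℓ if ℓ ∤ N and e is odd, and κ_N(ℓ^e) = 1 otherwise. Then Σ_{n > U} 1/(κ_N(n)·φ(n)) ≪_N 1/√U for U ≥ 1. -/
/-- The multiplicative function `κ_N` with `κ_N(ℓ^e) = ℓ` when `ℓ ∤ N` and `e` is odd,
and `κ_N(ℓ^e) = 1` otherwise. -/
def kappaN (N n : ℕ) : ℕ :=
  ∏ p ∈ n.primeFactors, if ¬ p ∣ N ∧ Odd (n.factorization p) then p else 1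

open Finset

namespace Stmt5Aux

/-- squarefree part of `n` : product of primes with odd exponent -/
def sqf (n : ℕ) : ℕ :=
  ∏ p ∈ n.primeFactors, if Odd (n.factorization p) then p else 1

/-- square-root of the remaining square part -/
def msq (n : ℕ) : ℕ :=
  ∏ p ∈ n.primeFactors, p ^ (n.factorization p / 2)

lemma telescope_sum_le (a f : ℕ → ℝ) (m : ℕ)
    (hf0 : ∀ j, 0 ≤ f j) (hfz : ∀ j, j < m → f j = 0)
    (hstep : ∀ j, m ≤ j → f j ≤ a j - a (j + 1)) (ha : ∀ j, 0 ≤ a j)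
    (A : Finset ℕ) : ∑ j ∈ A, f j ≤ a m := by
  obtain ⟨K, hK⟩ := A.exists_nat_subset_range
  have key : ∀ L, ∑ j ∈ range L, f j + a (max m L) ≤ a m := by
    intro L
    induction L with
    | zero => simp
    | succ L ih =>
      rcases le_or_gt m L with hmL | hLm
      · have h1 : max m L = L := max_eq_right hmL
        have h2 : max m (L + 1) = L + 1 := max_eq_right (by omega)
        rw [Finset.sum_range_succ, h2]
        have hs := hstep L hmL
        rw [h1] at ih
        linarith
      · have h2 : max m (L + 1) = m := max_eq_left (by omega)
        rw [h2]
        have hz : ∑ j ∈ range (L + 1), f j = 0 :=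
          Finset.sum_eq_zero fun j hj => hfz j (by simp at hj; omega)
        rw [hz]; simp
  calc ∑ j ∈ A, f j ≤ ∑ j ∈ range K, f j :=
        Finset.sum_le_sum_of_subset_of_nonneg hK fun i _ _ => hf0 i
    _ ≤ a m := by have h := key K; have h2 := ha (max m K); linarith

/-- F1 : finite sums of `1/j²` are at most 2. -/
lemma sum_inv_sq_le (A : Finset ℕ) : ∑ j ∈ A, 1 / (j : ℝ) ^ 2 ≤ 2 := by
  have h := telescope_sum_le (fun j => 2 / (j : ℝ)) (fun j => 1 / (j : ℝ) ^ 2) 1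
    (fun j => by positivity)
    (fun j hj => by interval_cases j; norm_num)
    (fun j hj => by
      have hj1 : (1 : ℝ) ≤ (j : ℝ) := by exact_mod_cast hj
      have h0 : (0 : ℝ) < (j : ℝ) := by linarith
      have h1 : (0 : ℝ) < (j : ℝ) + 1 := by linarith
      have e : 2 / (j : ℝ) - 2 / ((j : ℝ) + 1) = 2 / ((j : ℝ) * ((j : ℝ) + 1)) := by
        field_simp; ring
      push_cast
      rw [e, div_le_div_iff₀ (by positivity) (by positivity)]
      nlinarith)
    (fun j => by positivity) A
  simpa using h

/-- F1' : tail of `1/j²` beyond `x` is at most `2/x`. -/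
lemma sum_inv_sq_tail_le {x : ℝ} (hx : 0 < x) (A : Finset ℕ) :
    ∑ j ∈ A, (if x < (j : ℝ) then 1 / (j : ℝ) ^ 2 else 0) ≤ 2 / x := by
  set m := ⌊x⌋₊ + 1 with hm
  have h := telescope_sum_le (fun j => 2 / (j : ℝ))
    (fun j => if x < (j : ℝ) then 1 / (j : ℝ) ^ 2 else 0) m
    (fun j => by split_ifs <;> positivity)
    (fun j hj => by
      have : (j : ℝ) ≤ x := (Nat.le_floor_iff hx.le).mp (by omega)
      rw [if_neg (by linarith)])
    (fun j hj => by
      have hj1 : (1 : ℝ) ≤ (j : ℝ) := by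
        have : 1 ≤ j := le_trans (by omega) hj
        exact_mod_cast this
      have h0 : (0 : ℝ) < (j : ℝ) := by linarith
      have e : 2 / (j : ℝ) - 2 / ((j : ℝ) + 1) = 2 / ((j : ℝ) * ((j : ℝ) + 1)) := by
        field_simp; ring
      have hb : 1 / (j : ℝ) ^ 2 ≤ 2 / ((j : ℝ) * ((j : ℝ) + 1)) := by
        rw [div_le_div_iff₀ (by positivity) (by positivity)]
        nlinarith
      push_cast
      rw [e]
      split_ifs
      · exact hb
      · positivity)
    (fun j => by positivity) A
  refine h.trans ?_
  have hxm : x < (m : ℝ) := by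
    have := Nat.lt_floor_add_one x
    push_cast [hm]
    push_cast at this
    linarith
  gcongr

/-- F0 : finite sums of `1/(j√j)` are at most 4. -/
lemma sum_inv_pow32_le (A : Finset ℕ) :
    ∑ j ∈ A, 1 / ((j : ℝ) * Real.sqrt j) ≤ 4 := by
  have h := telescope_sum_le (fun j => 4 / Real.sqrt j) (fun j => 1 / ((j : ℝ) * Real.sqrt j)) 1
    (fun j => by positivity)
    (fun j hj => by interval_cases j; norm_num)
    (fun j hj => by
      have hj1 : (1 : ℝ) ≤ (j : ℝ) := by exact_mod_cast hj
      set u := Real.sqrt j with hu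
      set v := Real.sqrt ((j : ℕ) + 1 : ℕ) with hv
      have hu1 : 1 ≤ u := Real.one_le_sqrt.mpr hj1
      have hu0 : 0 < u := by linarith
      have hv0 : 0 < v := Real.sqrt_pos.mpr (by push_cast; linarith)
      have hu2 : u ^ 2 = (j : ℝ) := Real.sq_sqrt (by linarith)
      have hv2 : v ^ 2 = (j : ℝ) + 1 := by
        rw [hv]; push_cast; rw [Real.sq_sqrt (by linarith)]
      have huv : u < v := by nlinarith
      have hprod : (v - u) * (v + u) = 1 := by nlinarith
      have hv15 : v ≤ 1.5 * u := by nlinarith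
      have hju : (j : ℝ) * u = u ^ 2 * u := by rw [hu2]
      push_cast
      rw [show ((j : ℝ) + 1) = (((j : ℕ) + 1 : ℕ) : ℝ) by push_cast; ring] at *
      rw [hju, div_sub_div _ _ (ne_of_gt hu0) (ne_of_gt hv0),
        div_le_div_iff₀ (by positivity) (by positivity)]
      nlinarith [mul_pos hu0 hv0, mul_pos (mul_pos hu0 hu0) hu0,
        mul_le_mul_of_nonneg_left hv15 (le_of_lt (mul_pos hu0 hu0))]
    )
    (fun j => by positivity) A
  simpa using h

/-- F2 : `k/φ(k) ≤ ∑_{d|k} 1/φ(d)`. -/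
lemma totient_ratio_le (k : ℕ) (hk : k ≠ 0) :
    (k : ℝ) / (Nat.totient k) ≤ ∑ d ∈ k.divisors, 1 / (Nat.totient d : ℝ) := by
  have h0 : 0 < k := Nat.pos_of_ne_zero hk
  have hφk : 0 < Nat.totient k := Nat.totient_pos.mpr h0
  have hφkR : (0 : ℝ) < (Nat.totient k : ℝ) := by exact_mod_cast hφk
  rw [div_le_iff₀ hφkR]
  have hk_eq : (k : ℝ) = ∑ d ∈ k.divisors, (Nat.totient d : ℝ) := by
    exact_mod_cast congrArg (Nat.cast : ℕ → ℝ) (Nat.sum_totient k).symm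
  have flip : ∑ d ∈ k.divisors, (Nat.totient d : ℝ)
      = ∑ d ∈ k.divisors, (Nat.totient (k / d) : ℝ) :=
    (Nat.sum_div_divisors k fun d => (Nat.totient d : ℝ)).symm
  rw [hk_eq, flip, Finset.sum_mul]
  apply Finset.sum_le_sum
  intro d hd
  rw [Nat.mem_divisors] at hd
  have hdk : d ∣ k := hd.1
  have hd0 : 0 < d := Nat.pos_of_dvd_of_pos hdk h0
  have hφd : (0 : ℝ) < (Nat.totient d : ℝ) := by
    exact_mod_cast Nat.totient_pos.mpr hd0
  have hsm : Nat.totient (k / d) * Nat.totient d ≤ Nat.totient k := by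
    have := Nat.totient_super_multiplicative (k / d) d
    rwa [Nat.div_mul_cancel hdk] at this
  rw [one_div, inv_mul_eq_div, le_div_iff₀ hφd]
  exact_mod_cast hsm

/-- Reduce a sum over `k` of sums over divisor pairs of `k` to a bound over all pairs. -/
lemma sum_divisor_pairs_le (F : ℕ → ℕ → ℝ) (hF : ∀ p q, 0 ≤ F p q) (C : ℝ)
    (hC : ∀ B : Finset (ℕ × ℕ), ∑ p ∈ B, F p.1 p.2 ≤ C) (A : Finset ℕ) (hA : 0 ≤ C) :
    ∑ k ∈ A, ∑ d ∈ k.divisors, F d (k / d) ≤ C := by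
  classical
  have hrw : ∀ k, ∑ d ∈ k.divisors, F d (k / d)
      = ∑ p ∈ k.divisorsAntidiagonal, F p.1 p.2 :=
    fun k => (Nat.sum_divisorsAntidiagonal F).symm
  simp_rw [hrw]
  rw [← Finset.sum_biUnion]
  · exact hC _
  · intro k₁ _ k₂ _ hne
    refine Finset.disjoint_left.mpr fun p hp1 hp2 => hne ?_
    rw [Nat.mem_divisorsAntidiagonal] at hp1 hp2
    rw [← hp1.1, ← hp2.1]

/-- bound for sums over pairs, with a fiberwise bound -/
lemma pair_sum_le' (F : ℕ → ℕ → ℝ) (hF : ∀ p q, 0 ≤ F p q) (c : ℕ → ℝ)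
    (hc : ∀ d (J : Finset ℕ), ∑ j ∈ J, F d j ≤ c d) (C : ℝ)
    (hC : ∀ E : Finset ℕ, ∑ d ∈ E, c d ≤ C)
    (B : Finset (ℕ × ℕ)) : ∑ p ∈ B, F p.1 p.2 ≤ C := by
  classical
  have hsub : B ⊆ (B.image Prod.fst) ×ˢ (B.image Prod.snd) := by
    intro p hp
    rw [Finset.mem_product]
    exact ⟨Finset.mem_image_of_mem _ hp, Finset.mem_image_of_mem _ hp⟩
  calc ∑ p ∈ B, F p.1 p.2
      ≤ ∑ p ∈ (B.image Prod.fst) ×ˢ (B.image Prod.snd), F p.1 p.2 :=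
        Finset.sum_le_sum_of_subset_of_nonneg hsub fun p _ _ => hF p.1 p.2
    _ = ∑ d ∈ B.image Prod.fst, ∑ j ∈ B.image Prod.snd, F d j :=
        Finset.sum_product' _ _ _
    _ ≤ ∑ d ∈ B.image Prod.fst, c d := Finset.sum_le_sum fun d _ => hc d _
    _ ≤ C := hC _

/-- bound for sums over pairs with separated variables -/
lemma pair_sum_le (g h : ℕ → ℝ) (hg : ∀ d, 0 ≤ g d) (hh : ∀ j, 0 ≤ h j)
    (Cg Ch : ℝ) (hCg : ∀ E : Finset ℕ, ∑ d ∈ E, g d ≤ Cg)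
    (hCh : ∀ J : Finset ℕ, ∑ j ∈ J, h j ≤ Ch)
    (B : Finset (ℕ × ℕ)) : ∑ p ∈ B, g p.1 * h p.2 ≤ Cg * Ch := by
  have hCh0 : 0 ≤ Ch := le_trans (by simp) (hCh ∅)
  refine pair_sum_le' (fun d j => g d * h j) (fun p q => mul_nonneg (hg p) (hh q))
    (fun d => g d * Ch) (fun d J => ?_) (Cg * Ch) (fun E => ?_) B
  · rw [← Finset.mul_sum]
    exact mul_le_mul_of_nonneg_left (hCh J) (hg d)
  · rw [← Finset.sum_mul]
    exact mul_le_mul_of_nonneg_right (hCg E) hCh0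

lemma perk3 (k : ℕ) (hk : k ≠ 0) :
    1 / ((k : ℝ) * Nat.totient k)
      ≤ ∑ d ∈ k.divisors,
          (1 / ((d : ℝ) ^ 2 * Nat.totient d)) * (1 / ((k / d : ℕ) : ℝ) ^ 2) := by
  have h0 : 0 < k := Nat.pos_of_ne_zero hk
  have hkR : (0 : ℝ) < k := by exact_mod_cast h0
  have hφk : (0 : ℝ) < (Nat.totient k : ℝ) := by
    exact_mod_cast Nat.totient_pos.mpr h0
  have hsum : ∑ d ∈ k.divisors,
      (1 / ((d : ℝ) ^ 2 * Nat.totient d)) * (1 / ((k / d : ℕ) : ℝ) ^ 2)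
      = ∑ d ∈ k.divisors, (1 / (Nat.totient d : ℝ)) * (1 / (k : ℝ) ^ 2) := by
    apply Finset.sum_congr rfl
    intro d hd
    rw [Nat.mem_divisors] at hd
    have hdk := hd.1
    have hd0 : 0 < d := Nat.pos_of_dvd_of_pos hdk h0
    have hj0 : 0 < k / d := Nat.div_pos (Nat.le_of_dvd h0 hdk) hd0
    have hmul : (d : ℝ) * ((k / d : ℕ) : ℝ) = (k : ℝ) := by
      exact_mod_cast congrArg (Nat.cast : ℕ → ℝ) (Nat.mul_div_cancel' hdk)
    have hdR : (0 : ℝ) < d := by exact_mod_cast hd0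
    have hjR : (0 : ℝ) < ((k / d : ℕ) : ℝ) := by exact_mod_cast hj0
    have hφd : (0 : ℝ) < (Nat.totient d : ℝ) := by
      exact_mod_cast Nat.totient_pos.mpr hd0
    have hk2 : (k : ℝ) ^ 2 = (d : ℝ) ^ 2 * ((k / d : ℕ) : ℝ) ^ 2 := by
      rw [← hmul]; ring
    rw [hk2]
    field_simp
  rw [hsum, ← Finset.sum_mul]
  have hid : 1 / ((k : ℝ) * Nat.totient k)
      = ((k : ℝ) / Nat.totient k) * (1 / (k : ℝ) ^ 2) := by
    field_simp
  rw [hid]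
  exact mul_le_mul_of_nonneg_right (totient_ratio_le k hk) (by positivity)

/-- F3 : finite sums of `1/(kφ(k))` are at most 4. -/
lemma sum_inv_mul_totient_le (A : Finset ℕ) :
    ∑ k ∈ A, 1 / ((k : ℝ) * Nat.totient k) ≤ 4 := by
  have step : ∀ k ∈ A, 1 / ((k : ℝ) * Nat.totient k)
      ≤ ∑ d ∈ k.divisors,
          (1 / ((d : ℝ) ^ 2 * Nat.totient d)) * (1 / ((k / d : ℕ) : ℝ) ^ 2) := by
    intro k _
    rcases eq_or_ne k 0 with rfl | hk
    · simp
    · exact perk3 k hk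
  refine (Finset.sum_le_sum step).trans ?_
  refine sum_divisor_pairs_le
    (fun d j => (1 / ((d : ℝ) ^ 2 * Nat.totient d)) * (1 / (j : ℝ) ^ 2))
    (fun p q => by positivity) 4 (fun B => ?_) A (by norm_num)
  have hg : ∀ E : Finset ℕ, ∑ d ∈ E, 1 / ((d : ℝ) ^ 2 * Nat.totient d) ≤ 2 := by
    intro E
    refine le_trans (Finset.sum_le_sum fun d _ => ?_) (sum_inv_sq_le E)
    rcases eq_or_ne d 0 with rfl | hd
    · simp
    · have hφ : (1 : ℝ) ≤ (Nat.totient d : ℝ) := by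
        exact_mod_cast Nat.totient_pos.mpr (Nat.pos_of_ne_zero hd)
      exact one_div_le_one_div_of_le (by positivity)
        (le_mul_of_one_le_right (by positivity) hφ)
  have := pair_sum_le (fun d => 1 / ((d : ℝ) ^ 2 * Nat.totient d))
    (fun j => 1 / (j : ℝ) ^ 2) (fun d => by positivity) (fun j => by positivity)
    2 2 hg sum_inv_sq_le B
  linarith

/-- F3' : tail of `1/(kφ(k))` beyond `T` is at most `8/T`. -/
lemma sum_inv_mul_totient_tail_le {T : ℝ} (hT : 0 < T) (A : Finset ℕ) :
    ∑ k ∈ A, (if T < (k : ℝ) then 1 / ((k : ℝ) * Nat.totient k) else 0) ≤ 8 / T := by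
  have perk : ∀ k ∈ A, (if T < (k : ℝ) then 1 / ((k : ℝ) * Nat.totient k) else 0)
      ≤ ∑ d ∈ k.divisors, (1 / ((d : ℝ) ^ 2 * Nat.totient d)) *
          (if T / (d : ℝ) < ((k / d : ℕ) : ℝ) then 1 / ((k / d : ℕ) : ℝ) ^ 2 else 0) := by
    intro k _
    split_ifs with hTk
    · have hk : k ≠ 0 := by
        rintro rfl; simp only [Nat.cast_zero] at hTk; linarith
      have h0 : 0 < k := Nat.pos_of_ne_zero hk
      have heq : ∑ d ∈ k.divisors, (1 / ((d : ℝ) ^ 2 * Nat.totient d)) *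
          (if T / (d : ℝ) < ((k / d : ℕ) : ℝ) then 1 / ((k / d : ℕ) : ℝ) ^ 2 else 0)
          = ∑ d ∈ k.divisors,
            (1 / ((d : ℝ) ^ 2 * Nat.totient d)) * (1 / ((k / d : ℕ) : ℝ) ^ 2) := by
        apply Finset.sum_congr rfl
        intro d hd
        rw [Nat.mem_divisors] at hd
        have hdk := hd.1
        have hd0 : 0 < d := Nat.pos_of_dvd_of_pos hdk h0
        have hdR : (0 : ℝ) < d := by exact_mod_cast hd0
        have hmul : (d : ℝ) * ((k / d : ℕ) : ℝ) = (k : ℝ) := by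
          exact_mod_cast congrArg (Nat.cast : ℕ → ℝ) (Nat.mul_div_cancel' hdk)
        rw [if_pos]
        rw [div_lt_iff₀ hdR, mul_comm, hmul]
        exact hTk
      rw [heq]
      exact perk3 k hk
    · apply Finset.sum_nonneg
      intro d _
      have : (0:ℝ) ≤ (if T / (d : ℝ) < ((k / d : ℕ) : ℝ) then 1 / ((k / d : ℕ) : ℝ) ^ 2 else 0) := by
        split_ifs <;> positivity
      positivity
  refine (Finset.sum_le_sum perk).trans ?_
  refine sum_divisor_pairs_le
    (fun d j => (1 / ((d : ℝ) ^ 2 * Nat.totient d)) *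
      (if T / (d : ℝ) < (j : ℝ) then 1 / (j : ℝ) ^ 2 else 0))
    (fun p q => ?_) (8 / T) (fun B => ?_) A (by positivity)
  · have : (0:ℝ) ≤ (if T / (p : ℝ) < (q : ℝ) then 1 / (q : ℝ) ^ 2 else 0) := by
      split_ifs <;> positivity
    positivity
  refine pair_sum_le'
    (fun d j => (1 / ((d : ℝ) ^ 2 * Nat.totient d)) *
      (if T / (d : ℝ) < (j : ℝ) then 1 / (j : ℝ) ^ 2 else 0)) (fun p q => ?_)
    (fun d => (2 / T) * (1 / ((d : ℝ) * Nat.totient d))) (fun d J => ?_) (8 / T)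
    (fun E => ?_) B
  · have : (0:ℝ) ≤ (if T / (p : ℝ) < (q : ℝ) then 1 / (q : ℝ) ^ 2 else 0) := by
      split_ifs <;> positivity
    positivity
  · rcases eq_or_ne d 0 with rfl | hd
    · simp
    · have hd0 : 0 < d := Nat.pos_of_ne_zero hd
      have hdR : (0 : ℝ) < d := by exact_mod_cast hd0
      have hφd : (0 : ℝ) < (Nat.totient d : ℝ) := by
        exact_mod_cast Nat.totient_pos.mpr hd0
      rw [← Finset.mul_sum]
      have htail := sum_inv_sq_tail_le (x := T / d) (by positivity) J
      calc (1 / ((d : ℝ) ^ 2 * Nat.totient d)) *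
            ∑ j ∈ J, (if T / (d : ℝ) < (j : ℝ) then 1 / (j : ℝ) ^ 2 else 0)
          ≤ (1 / ((d : ℝ) ^ 2 * Nat.totient d)) * (2 / (T / d)) :=
            mul_le_mul_of_nonneg_left htail (by positivity)
        _ = (2 / T) * (1 / ((d : ℝ) * Nat.totient d)) := by
            field_simp
  · rw [← Finset.mul_sum]
    have := sum_inv_mul_totient_le E
    calc (2 / T) * ∑ d ∈ E, 1 / ((d : ℝ) * Nat.totient d)
        ≤ (2 / T) * 4 := mul_le_mul_of_nonneg_left this (by positivity)
      _ = 8 / T := by field_simp; ring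

/-- F4 : finite sums of `1/(√s φ(s))` are at most 16. -/
lemma sum_inv_sqrt_mul_totient_le (A : Finset ℕ) :
    ∑ s ∈ A, 1 / (Real.sqrt s * Nat.totient s) ≤ 16 := by
  have perk : ∀ k ∈ A, 1 / (Real.sqrt k * Nat.totient k)
      ≤ ∑ d ∈ k.divisors, (1 / ((d : ℝ) * Real.sqrt d * Nat.totient d)) *
          (1 / (((k / d : ℕ) : ℝ) * Real.sqrt (k / d : ℕ))) := by
    intro k _
    rcases eq_or_ne k 0 with rfl | hk
    · simp
    · have h0 : 0 < k := Nat.pos_of_ne_zero hk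
      have hkR : (0 : ℝ) < k := by exact_mod_cast h0
      have hφk : (0 : ℝ) < (Nat.totient k : ℝ) := by
        exact_mod_cast Nat.totient_pos.mpr h0
      have hsk : (0 : ℝ) < Real.sqrt k := Real.sqrt_pos.mpr hkR
      have hsum : ∑ d ∈ k.divisors, (1 / ((d : ℝ) * Real.sqrt d * Nat.totient d)) *
          (1 / (((k / d : ℕ) : ℝ) * Real.sqrt (k / d : ℕ)))
          = ∑ d ∈ k.divisors,
            (1 / (Nat.totient d : ℝ)) * (1 / ((k : ℝ) * Real.sqrt k)) := by
        apply Finset.sum_congr rfl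
        intro d hd
        rw [Nat.mem_divisors] at hd
        have hdk := hd.1
        have hd0 : 0 < d := Nat.pos_of_dvd_of_pos hdk h0
        have hj0 : 0 < k / d := Nat.div_pos (Nat.le_of_dvd h0 hdk) hd0
        have hdR : (0 : ℝ) < d := by exact_mod_cast hd0
        have hjR : (0 : ℝ) < ((k / d : ℕ) : ℝ) := by exact_mod_cast hj0
        have hφd : (0 : ℝ) < (Nat.totient d : ℝ) := by
          exact_mod_cast Nat.totient_pos.mpr hd0
        have hmul : (d : ℝ) * ((k / d : ℕ) : ℝ) = (k : ℝ) := by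
          exact_mod_cast congrArg (Nat.cast : ℕ → ℝ) (Nat.mul_div_cancel' hdk)
        have hs : Real.sqrt d * Real.sqrt ((k / d : ℕ) : ℝ) = Real.sqrt k := by
          rw [← Real.sqrt_mul hdR.le, hmul]
        have hsd : (0 : ℝ) < Real.sqrt d := Real.sqrt_pos.mpr hdR
        have hsj : (0 : ℝ) < Real.sqrt ((k / d : ℕ) : ℝ) := Real.sqrt_pos.mpr hjR
        rw [← hs, ← hmul]
        field_simp
      rw [hsum, ← Finset.sum_mul]
      have hid : 1 / (Real.sqrt k * Nat.totient k)
          = ((k : ℝ) / Nat.totient k) * (1 / ((k : ℝ) * Real.sqrt k)) := by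
        field_simp
      rw [hid]
      exact mul_le_mul_of_nonneg_right (totient_ratio_le k hk) (by positivity)
  refine (Finset.sum_le_sum perk).trans ?_
  refine sum_divisor_pairs_le
    (fun d j => (1 / ((d : ℝ) * Real.sqrt d * Nat.totient d)) *
      (1 / ((j : ℝ) * Real.sqrt j)))
    (fun p q => by positivity) 16 (fun B => ?_) A (by norm_num)
  have hg : ∀ E : Finset ℕ, ∑ d ∈ E, 1 / ((d : ℝ) * Real.sqrt d * Nat.totient d) ≤ 4 := by
    intro E
    refine le_trans (Finset.sum_le_sum fun d _ => ?_) (sum_inv_pow32_le E)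
    rcases eq_or_ne d 0 with rfl | hd
    · simp
    · have hd0 : 0 < d := Nat.pos_of_ne_zero hd
      have hdR : (0 : ℝ) < d := by exact_mod_cast hd0
      have hφ : (1 : ℝ) ≤ (Nat.totient d : ℝ) := by
        exact_mod_cast Nat.totient_pos.mpr hd0
      have hsd : (0 : ℝ) < Real.sqrt d := Real.sqrt_pos.mpr hdR
      exact one_div_le_one_div_of_le (by positivity)
        (le_mul_of_one_le_right (by positivity) hφ)
  have := pair_sum_le (fun d => 1 / ((d : ℝ) * Real.sqrt d * Nat.totient d))
    (fun j => 1 / ((j : ℝ) * Real.sqrt j)) (fun d => by positivity)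
    (fun j => by positivity) 4 4 hg sum_inv_pow32_le B
  linarith

/-- `b ∣ a → b * φ a ≤ φ (a * b)`. -/
lemma dvd_mul_totient_le (a : ℕ) : ∀ b : ℕ, b ∣ a → b * Nat.totient a ≤ Nat.totient (a * b) := by
  intro b
  induction b using Nat.strong_induction_on with
  | _ b ih =>
    intro hba
    rcases Nat.lt_or_ge b 2 with hb | hb
    · interval_cases b
      · simp
      · simp
    · set p := b.minFac with hp_def
      have hp : p.Prime := Nat.minFac_prime (by omega)
      have hpb : p ∣ b := Nat.minFac_dvd b
      set c := b / p with hc_def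
      have hbc : b = p * c := (Nat.mul_div_cancel' hpb).symm
      have hp2 : 2 ≤ p := hp.two_le
      have hb0 : 0 < b := by omega
      have hc0 : 0 < c := by
        rcases Nat.eq_zero_or_pos c with h | h
        · rw [h, mul_zero] at hbc; omega
        · exact h
      have hclt : c < b := by
        rw [hbc]
        calc c = 1 * c := (one_mul c).symm
          _ < p * c := by
            apply Nat.mul_lt_mul_of_lt_of_le (by omega) le_rfl hc0
      have hcb : c ∣ b := ⟨p, by rw [hbc]; ring⟩
      have hca : c ∣ a := hcb.trans hba
      have h1 := ih c hclt hca
      have hpa : p ∣ a := hpb.trans hba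
      have hp_dvd : p ∣ a * c := dvd_mul_of_dvd_left hpa c
      have h2 : Nat.totient (a * b) = p * Nat.totient (a * c) := by
        rw [hbc, show a * (p * c) = p * (a * c) by ring,
          Nat.totient_mul_of_prime_of_dvd hp hp_dvd]
      calc b * Nat.totient a = p * (c * Nat.totient a) := by rw [hbc]; ring
        _ ≤ p * Nat.totient (a * c) := Nat.mul_le_mul_left p h1
        _ = Nat.totient (a * b) := h2.symm

lemma sqf_mul_msq_sq (n : ℕ) (hn : n ≠ 0) : sqf n * msq n ^ 2 = n := by
  have hfact := Nat.factorization_prod_pow_eq_self hn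
  rw [Finsupp.prod] at hfact
  conv_rhs => rw [← hfact]
  rw [sqf, msq, ← Finset.prod_pow, ← Finset.prod_mul_distrib]
  apply Finset.prod_congr rfl
  intro p hp
  set e := n.factorization p with he
  rcases Nat.even_or_odd e with hev | hod
  · rw [if_neg (Nat.not_odd_iff_even.mpr hev), one_mul, ← pow_mul]
    congr 1
    obtain ⟨t, ht⟩ := hev
    omega
  · rw [if_pos hod, ← pow_mul]
    rw [← pow_succ']
    congr 1
    obtain ⟨t, ht⟩ := hod
    omega

lemma sqf_le (N n : ℕ) (hN : N ≠ 0) : sqf n ≤ N * kappaN N n := by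
  have step : sqf n ≤ (∏ p ∈ n.primeFactors,
      if ¬ p ∣ N ∧ Odd (n.factorization p) then p else 1) *
      ∏ p ∈ n.primeFactors, (if p ∣ N then p else 1) := by
    rw [← Finset.prod_mul_distrib, sqf]
    apply Finset.prod_le_prod'
    intro p hp
    have hp2 : 2 ≤ p := (Nat.prime_of_mem_primeFactors hp).two_le
    by_cases hpn : p ∣ N <;> by_cases ho : Odd (n.factorization p) <;>
      simp [hpn, ho] <;> omega
  have hD : (∏ p ∈ n.primeFactors, (if p ∣ N then p else 1)) ≤ N := by
    have h2 : ∏ p ∈ n.primeFactors, (if p ∣ N then p else 1)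
        = ∏ p ∈ n.primeFactors.filter (· ∣ N), p := (Finset.prod_filter _ _).symm
    have h1 : (∏ p ∈ n.primeFactors.filter (· ∣ N), p) ∣ N := by
      refine dvd_trans (Finset.prod_dvd_prod_of_subset _ N.primeFactors _ ?_)
        (Nat.prod_primeFactors_dvd N)
      intro p hp
      rw [Finset.mem_filter] at hp
      exact Nat.mem_primeFactors.mpr
        ⟨Nat.prime_of_mem_primeFactors hp.1, hp.2, hN⟩
    rw [h2]
    exact Nat.le_of_dvd (Nat.pos_of_ne_zero hN) h1
  calc sqf n ≤ kappaN N n * ∏ p ∈ n.primeFactors, (if p ∣ N then p else 1) := step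
    _ ≤ kappaN N n * N := Nat.mul_le_mul_left _ hD
    _ = N * kappaN N n := mul_comm _ _

lemma totient_lower (n : ℕ) (hn : n ≠ 0) :
    Nat.totient (sqf n) * (msq n * Nat.totient (msq n)) ≤ Nat.totient n := by
  conv_rhs => rw [← sqf_mul_msq_sq n hn]
  calc Nat.totient (sqf n) * (msq n * Nat.totient (msq n))
      ≤ Nat.totient (sqf n) * Nat.totient (msq n ^ 2) := by
        apply Nat.mul_le_mul_left
        have := dvd_mul_totient_le (msq n) (msq n) dvd_rfl
        rwa [← sq] at this
    _ ≤ Nat.totient (sqf n * msq n ^ 2) := Nat.totient_super_multiplicative _ _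

end Stmt5Aux

/-- For fixed `N ≥ 1`, `Σ_{n > U} 1/(κ_N(n)·φ(n)) ≪_N 1/√U` for `U ≥ 1`. -/
theorem stmt5 (N : ℕ) (hN : 1 ≤ N) :
    ∃ C : ℝ, ∀ U : ℕ, 1 ≤ U →
      (∑' n : ℕ, if n ≤ U then (0 : ℝ)
        else 1 / ((kappaN N n : ℝ) * (Nat.totient n)))
        ≤ C / Real.sqrt U := by
  classical
  refine ⟨160 * N, fun U hU => ?_⟩
  have hU1 : (1 : ℝ) ≤ (U : ℝ) := by exact_mod_cast hU
  have hUpos : (0 : ℝ) < U := by linarith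
  have hsU : (0 : ℝ) < Real.sqrt U := Real.sqrt_pos.mpr hUpos
  have hNpos : (0 : ℝ) < N := by exact_mod_cast hN
  have hC0 : (0 : ℝ) ≤ 160 * N / Real.sqrt U := by positivity
  apply tsum_le_of_sum_le' hC0
  intro S
  set f : ℕ → ℝ := fun n => if n ≤ U then (0 : ℝ)
    else 1 / ((kappaN N n : ℝ) * (Nat.totient n)) with hf
  set G : ℕ × ℕ → ℝ := fun p =>
    if (U : ℝ) < (p.1 : ℝ) * (p.2 : ℝ) ^ 2 then
      (N : ℝ) * ((1 / ((p.1 : ℝ) * Nat.totient p.1)) *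
        (1 / ((p.2 : ℝ) * Nat.totient p.2)))
    else 0 with hG
  have hG0 : ∀ p : ℕ × ℕ, 0 ≤ G p := by
    intro p; rw [hG]; dsimp only; split_ifs <;> positivity
  -- inner sum bound when `s ≤ U`
  have inner1 : ∀ s : ℕ, s ≤ U → ∀ J : Finset ℕ,
      ∑ m ∈ J, G (s, m)
        ≤ (8 * N / Real.sqrt U) * (1 / (Real.sqrt s * Nat.totient s)) := by
    intro s hsU' J
    rcases eq_or_ne s 0 with rfl | hs0
    · have hz : ∀ m ∈ J, G (0, m) = 0 := by
        intro m _
        rw [hG]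
        dsimp only
        rw [if_neg]
        push_cast
        rw [zero_mul]
        linarith
      rw [Finset.sum_eq_zero hz]
      positivity
    · have hs1 : 0 < s := Nat.pos_of_ne_zero hs0
      have hsR : (0 : ℝ) < s := by exact_mod_cast hs1
      have hφs : (0 : ℝ) < (Nat.totient s : ℝ) := by
        exact_mod_cast Nat.totient_pos.mpr hs1
      set a := Real.sqrt (s : ℝ) with ha
      have hss : (0 : ℝ) < a := Real.sqrt_pos.mpr hsR
      have haa : a * a = (s : ℝ) := Real.mul_self_sqrt hsR.le
      have hx : (0 : ℝ) < Real.sqrt U / a := by positivity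
      have hstep : ∀ m ∈ J, G (s, m)
          ≤ ((N : ℝ) * (1 / ((s : ℝ) * Nat.totient s))) *
            (if Real.sqrt U / a < (m : ℝ) then 1 / ((m : ℝ) * Nat.totient m) else 0) := by
        intro m _
        by_cases hc : (U : ℝ) < (s : ℝ) * (m : ℝ) ^ 2
        · have hm0 : m ≠ 0 := by
            rintro rfl
            push_cast at hc
            nlinarith
          have hmR : (0 : ℝ) < (m : ℝ) := by
            exact_mod_cast Nat.pos_of_ne_zero hm0
          have hm2 : (U : ℝ) / (s : ℝ) < (m : ℝ) ^ 2 := by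
            rw [div_lt_iff₀ hsR]
            nlinarith
          have hcond : Real.sqrt U / a < (m : ℝ) := by
            rw [ha, ← Real.sqrt_div hUpos.le]
            exact (Real.sqrt_lt' hmR).mpr hm2
          rw [hG]
          dsimp only
          rw [if_pos hc, if_pos hcond]
          exact le_of_eq (by ring)
        · rw [hG]
          dsimp only
          rw [if_neg hc]
          have : (0:ℝ) ≤ (if Real.sqrt U / a < (m : ℝ)
              then 1 / ((m : ℝ) * Nat.totient m) else 0) := by
            split_ifs <;> positivity
          positivity
      calc ∑ m ∈ J, G (s, m)
          ≤ ∑ m ∈ J, ((N : ℝ) * (1 / ((s : ℝ) * Nat.totient s))) *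
              (if Real.sqrt U / a < (m : ℝ) then 1 / ((m : ℝ) * Nat.totient m) else 0) :=
            Finset.sum_le_sum hstep
        _ = ((N : ℝ) * (1 / ((s : ℝ) * Nat.totient s))) *
              ∑ m ∈ J, (if Real.sqrt U / a < (m : ℝ)
                then 1 / ((m : ℝ) * Nat.totient m) else 0) := by
            rw [Finset.mul_sum]
        _ ≤ ((N : ℝ) * (1 / ((s : ℝ) * Nat.totient s))) * (8 / (Real.sqrt U / a)) :=
            mul_le_mul_of_nonneg_left (Stmt5Aux.sum_inv_mul_totient_tail_le hx J) (by positivity)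
        _ = (8 * N / Real.sqrt U) * (1 / (a * Nat.totient s)) := by
            rw [← haa]
            field_simp
  -- inner sum bound in general
  have inner2 : ∀ s : ℕ, ∀ J : Finset ℕ,
      ∑ m ∈ J, G (s, m) ≤ (N : ℝ) * (1 / ((s : ℝ) * Nat.totient s)) * 4 := by
    intro s J
    have hstep : ∀ m ∈ J, G (s, m)
        ≤ ((N : ℝ) * (1 / ((s : ℝ) * Nat.totient s))) * (1 / ((m : ℝ) * Nat.totient m)) := by
      intro m _
      rw [hG]
      dsimp only
      split_ifs
      · exact le_of_eq (by ring)
      · positivity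
    calc ∑ m ∈ J, G (s, m)
        ≤ ∑ m ∈ J, ((N : ℝ) * (1 / ((s : ℝ) * Nat.totient s))) *
            (1 / ((m : ℝ) * Nat.totient m)) := Finset.sum_le_sum hstep
      _ = ((N : ℝ) * (1 / ((s : ℝ) * Nat.totient s))) *
            ∑ m ∈ J, 1 / ((m : ℝ) * Nat.totient m) := by rw [Finset.mul_sum]
      _ ≤ (N : ℝ) * (1 / ((s : ℝ) * Nat.totient s)) * 4 :=
          mul_le_mul_of_nonneg_left (Stmt5Aux.sum_inv_mul_totient_le J) (by positivity)
  -- the master bound over pairs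
  have main2 : ∀ B : Finset (ℕ × ℕ), ∑ p ∈ B, G p ≤ 160 * N / Real.sqrt U := by
    intro B
    have hsub : B ⊆ (B.image Prod.fst) ×ˢ (B.image Prod.snd) := by
      intro p hp
      rw [Finset.mem_product]
      exact ⟨Finset.mem_image_of_mem _ hp, Finset.mem_image_of_mem _ hp⟩
    set E := B.image Prod.fst
    set J := B.image Prod.snd
    have h1 : ∑ p ∈ B, G p ≤ ∑ p ∈ E ×ˢ J, G p :=
      Finset.sum_le_sum_of_subset_of_nonneg hsub fun p _ _ => hG0 p
    have h2 : ∑ p ∈ E ×ˢ J, G p = ∑ s ∈ E, ∑ m ∈ J, G (s, m) :=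
      Finset.sum_product _ _ _
    have hsplit : ∑ s ∈ E, ∑ m ∈ J, G (s, m)
        = (∑ s ∈ E.filter (fun s => s ≤ U), ∑ m ∈ J, G (s, m))
          + ∑ s ∈ E.filter (fun s => ¬ s ≤ U), ∑ m ∈ J, G (s, m) :=
      (Finset.sum_filter_add_sum_filter_not E _ _).symm
    have hpart1 : ∑ s ∈ E.filter (fun s => s ≤ U), ∑ m ∈ J, G (s, m)
        ≤ 128 * N / Real.sqrt U := by
      calc ∑ s ∈ E.filter (fun s => s ≤ U), ∑ m ∈ J, G (s, m)
          ≤ ∑ s ∈ E.filter (fun s => s ≤ U),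
              (8 * N / Real.sqrt U) * (1 / (Real.sqrt s * Nat.totient s)) := by
            apply Finset.sum_le_sum
            intro s hs
            rw [Finset.mem_filter] at hs
            exact inner1 s hs.2 J
        _ = (8 * N / Real.sqrt U) *
              ∑ s ∈ E.filter (fun s => s ≤ U), 1 / (Real.sqrt s * Nat.totient s) := by
            rw [Finset.mul_sum]
        _ ≤ (8 * N / Real.sqrt U) * 16 :=
            mul_le_mul_of_nonneg_left (Stmt5Aux.sum_inv_sqrt_mul_totient_le _) (by positivity)
        _ = 128 * N / Real.sqrt U := by ring
    have hpart2 : ∑ s ∈ E.filter (fun s => ¬ s ≤ U), ∑ m ∈ J, G (s, m)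
        ≤ 32 * N / Real.sqrt U := by
      have hstep2 : ∑ s ∈ E.filter (fun s => ¬ s ≤ U), ∑ m ∈ J, G (s, m)
          ≤ ∑ s ∈ E.filter (fun s => ¬ s ≤ U),
              (4 * N) * (if (U : ℝ) < (s : ℝ)
                then 1 / ((s : ℝ) * Nat.totient s) else 0) := by
        apply Finset.sum_le_sum
        intro s hs
        rw [Finset.mem_filter] at hs
        have hUs : (U : ℝ) < (s : ℝ) := by exact_mod_cast Nat.lt_of_not_le hs.2
        rw [if_pos hUs]
        calc ∑ m ∈ J, G (s, m) ≤ (N : ℝ) * (1 / ((s : ℝ) * Nat.totient s)) * 4 :=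
              inner2 s J
          _ = (4 * N) * (1 / ((s : ℝ) * Nat.totient s)) := by ring
      refine hstep2.trans ?_
      rw [← Finset.mul_sum]
      have htail := Stmt5Aux.sum_inv_mul_totient_tail_le hUpos (E.filter (fun s => ¬ s ≤ U))
      calc (4 * (N:ℝ)) * ∑ s ∈ E.filter (fun s => ¬ s ≤ U),
            (if (U : ℝ) < (s : ℝ) then 1 / ((s : ℝ) * Nat.totient s) else 0)
          ≤ (4 * N) * (8 / U) := mul_le_mul_of_nonneg_left htail (by positivity)
        _ = 32 * N / U := by ring
        _ ≤ 32 * N / Real.sqrt U := by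
            apply div_le_div_of_nonneg_left (by positivity) hsU
            calc Real.sqrt U ≤ Real.sqrt U * Real.sqrt U := by
                  nlinarith [Real.one_le_sqrt.mpr hU1, hsU]
              _ = (U : ℝ) := Real.mul_self_sqrt hUpos.le
    calc ∑ p ∈ B, G p ≤ ∑ s ∈ E, ∑ m ∈ J, G (s, m) := by rw [← h2]; exact h1
      _ = _ + _ := hsplit
      _ ≤ 128 * N / Real.sqrt U + 32 * N / Real.sqrt U := add_le_add hpart1 hpart2
      _ = 160 * N / Real.sqrt U := by ring
  -- pointwise comparison along the encoding n ↦ (sqf n, msq n)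
  set S' := S.filter (fun n => U < n) with hS'
  have hfS : ∑ n ∈ S, f n = ∑ n ∈ S', f n := by
    rw [hS', ← Finset.sum_filter_add_sum_filter_not S (fun n => U < n)]
    have hz : ∑ n ∈ S.filter (fun n => ¬ U < n), f n = 0 := by
      apply Finset.sum_eq_zero
      intro n hn
      rw [Finset.mem_filter] at hn
      rw [hf]
      dsimp only
      rw [if_pos (by omega)]
    rw [hz, add_zero]
  have hptwise : ∀ n ∈ S', f n ≤ G (Stmt5Aux.sqf n, Stmt5Aux.msq n) := by
    intro n hn
    rw [Finset.mem_filter] at hn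
    have hUn : U < n := hn.2
    have hn0 : n ≠ 0 := by omega
    have hnpos : 0 < n := Nat.pos_of_ne_zero hn0
    set s := Stmt5Aux.sqf n with hs_def
    set m := Stmt5Aux.msq n with hm_def
    have hdecomp : s * m ^ 2 = n := Stmt5Aux.sqf_mul_msq_sq n hn0
    have hspos : 0 < s := by
      rw [hs_def, Stmt5Aux.sqf]
      apply Finset.prod_pos
      intro p hp
      split_ifs
      · exact (Nat.prime_of_mem_primeFactors hp).pos
      · norm_num
    have hmpos : 0 < m := by
      rw [hm_def, Stmt5Aux.msq]
      apply Finset.prod_pos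
      intro p hp
      exact pow_pos (Nat.prime_of_mem_primeFactors hp).pos _
    have hκpos : 0 < kappaN N n := by
      rw [kappaN]
      apply Finset.prod_pos
      intro p hp
      split_ifs
      · exact (Nat.prime_of_mem_primeFactors hp).pos
      · norm_num
    have hφn : 0 < Nat.totient n := Nat.totient_pos.mpr hnpos
    have hφs : 0 < Nat.totient s := Nat.totient_pos.mpr hspos
    have hφm : 0 < Nat.totient m := Nat.totient_pos.mpr hmpos
    have hcond : (U : ℝ) < (s : ℝ) * (m : ℝ) ^ 2 := by
      have : ((s * m ^ 2 : ℕ) : ℝ) = (s : ℝ) * (m : ℝ) ^ 2 := by push_cast; ring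
      rw [← this, hdecomp]
      exact_mod_cast hUn
    have hnat : s * Nat.totient s * (m * Nat.totient m)
        ≤ N * kappaN N n * Nat.totient n := by
      have h1 := Stmt5Aux.sqf_le N n (by omega)
      have h2 := Stmt5Aux.totient_lower n hn0
      calc s * Nat.totient s * (m * Nat.totient m)
          = s * (Nat.totient s * (m * Nat.totient m)) := by ring
        _ ≤ (N * kappaN N n) * Nat.totient n := Nat.mul_le_mul h1 h2
        _ = N * kappaN N n * Nat.totient n := by ring
    have hnatR : (s : ℝ) * Nat.totient s * ((m : ℝ) * Nat.totient m)
        ≤ (N : ℝ) * kappaN N n * Nat.totient n := by exact_mod_cast hnat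
    have hXpos : (0 : ℝ) < (s : ℝ) * Nat.totient s * ((m : ℝ) * Nat.totient m) := by
      have h1 : (0:ℝ) < (s:ℝ) := by exact_mod_cast hspos
      have h2 : (0:ℝ) < (Nat.totient s:ℝ) := by exact_mod_cast hφs
      have h3 : (0:ℝ) < (m:ℝ) := by exact_mod_cast hmpos
      have h4 : (0:ℝ) < (Nat.totient m:ℝ) := by exact_mod_cast hφm
      positivity
    have hκR : (0 : ℝ) < (kappaN N n : ℝ) := by exact_mod_cast hκpos
    have hφnR : (0 : ℝ) < (Nat.totient n : ℝ) := by exact_mod_cast hφn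
    rw [hf, hG]
    dsimp only
    rw [if_neg (by omega), if_pos hcond]
    have heq : 1 / ((kappaN N n : ℝ) * Nat.totient n)
        = (N : ℝ) / ((N : ℝ) * kappaN N n * Nat.totient n) := by
      rw [eq_div_iff (by positivity)]
      field_simp
    rw [heq]
    calc (N : ℝ) / ((N : ℝ) * kappaN N n * Nat.totient n)
        ≤ (N : ℝ) / ((s : ℝ) * Nat.totient s * ((m : ℝ) * Nat.totient m)) :=
          div_le_div_of_nonneg_left hNpos.le hXpos hnatR
      _ = (N : ℝ) * ((1 / ((s : ℝ) * Nat.totient s)) * (1 / ((m : ℝ) * Nat.totient m))) := by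
          field_simp
  have hinj : Set.InjOn (fun n => (Stmt5Aux.sqf n, Stmt5Aux.msq n)) ↑S' := by
    intro n₁ h₁ n₂ h₂ heq
    simp only [Finset.coe_filter, Set.mem_setOf_eq, hS'] at h₁ h₂
    have hn₁ : n₁ ≠ 0 := by omega
    have hn₂ : n₂ ≠ 0 := by omega
    have e1 := Stmt5Aux.sqf_mul_msq_sq n₁ hn₁
    have e2 := Stmt5Aux.sqf_mul_msq_sq n₂ hn₂
    simp only [Prod.mk.injEq] at heq
    rw [← e1, ← e2, heq.1, heq.2]
  calc ∑ n ∈ S, f n = ∑ n ∈ S', f n := hfS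
    _ ≤ ∑ n ∈ S', G (Stmt5Aux.sqf n, Stmt5Aux.msq n) := Finset.sum_le_sum hptwise
    _ = ∑ p ∈ S'.image (fun n => (Stmt5Aux.sqf n, Stmt5Aux.msq n)), G p :=
        (Finset.sum_image fun x hx y hy h => hinj hx hy h).symm
    _ ≤ 160 * N / Real.sqrt U := main2 _
end

section
/- For any odd prime ℓ and integers r, k with ℓ ∤ 2rk, and any positive integer e, the sum Σ_{a ∈ ℤ/ℓℤ} (a/ℓ)^e · [ ((r²−ak²)/ℓ)² + ((r²−ak²)/ℓ) ] equals ℓ−3 if e is even and −(1 + (−1/ℓ)) if e is odd, where (·/ℓ) is the Legendre symbol. -/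
open Finset

section helpers
variable {F : Type*} [Field F] [Fintype F] [DecidableEq F]

omit [DecidableEq F] in
lemma sum_affine (f : F → ℤ) {c : F} (hc : c ≠ 0) (b : F) :
    ∑ x : F, f (b + c * x) = ∑ x : F, f x :=
  Fintype.sum_bijective _ ((Equiv.mulLeft₀ c hc).trans (Equiv.addLeft b)).bijective
    _ _ (fun _ => rfl)

lemma sum_quadChar_sq :
    ∑ x : F, (quadraticChar F x) ^ 2 = (Fintype.card F : ℤ) - 1 := by
  have h : ∀ x : F, (quadraticChar F x) ^ 2 = 1 - (if x = 0 then 1 else 0) := by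
    intro x
    by_cases hx : x = 0
    · simp [hx]
    · rw [quadraticChar_sq_one hx]; simp [hx]
  rw [Finset.sum_congr rfl fun x _ => h x, Finset.sum_sub_distrib]
  simp [Finset.card_univ]

lemma sum_range_zmod {n : ℕ} [NeZero n] (f : ZMod n → ℤ) :
    ∑ a ∈ Finset.range n, f (a : ZMod n) = ∑ x : ZMod n, f x := by
  refine Finset.sum_nbij' (fun a => (a : ZMod n)) (fun x => x.val) ?_ ?_ ?_ ?_ ?_
  · intro a _; exact Finset.mem_univ _
  · intro x _; exact Finset.mem_range.mpr (ZMod.val_lt x)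
  · intro a ha; exact ZMod.val_cast_of_lt (Finset.mem_range.mp ha)
  · intro x _; exact ZMod.natCast_rightInverse x
  · intro a _; rfl

end helpers

set_option maxHeartbeats 1000000 in
/-- For an odd prime `ℓ ∤ 2rk` and `e ≥ 1`,
`Σ_{a mod ℓ} (a/ℓ)^e·[((r²−ak²)/ℓ)² + ((r²−ak²)/ℓ)]` equals `ℓ−3` for even `e`
and `−(1+(−1/ℓ))` for odd `e`. -/
theorem stmt6 (ℓ : ℕ) [Fact ℓ.Prime] (hℓ : ℓ ≠ 2) (r k : ℤ)
    (h : ¬ ((ℓ : ℤ) ∣ 2 * r * k)) (e : ℕ) (he : 1 ≤ e) :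
    (∑ a ∈ Finset.range ℓ,
        (legendreSym ℓ (a : ℤ)) ^ e *
          ((legendreSym ℓ (r ^ 2 - (a : ℤ) * k ^ 2)) ^ 2 +
            legendreSym ℓ (r ^ 2 - (a : ℤ) * k ^ 2)))
      = if Even e then (ℓ : ℤ) - 3 else -(1 + legendreSym ℓ (-1)) := by
  have hp : ℓ.Prime := Fact.out
  have : NeZero ℓ := ⟨hp.ne_zero⟩
  have hchar : ringChar (ZMod ℓ) ≠ 2 := by
    rw [ZMod.ringChar_zmod_n]; exact hℓ
  have hr : ((r : ZMod ℓ)) ≠ 0 := by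
    intro h0
    exact h (((ZMod.intCast_zmod_eq_zero_iff_dvd r ℓ).mp h0).mul_left 2 |>.mul_right k)
  have hk : ((k : ZMod ℓ)) ≠ 0 := by
    intro h0
    exact h (((ZMod.intCast_zmod_eq_zero_iff_dvd k ℓ).mp h0).mul_left (2 * r))
  set χ := quadraticChar (ZMod ℓ) with hχ
  set R := ((r : ZMod ℓ)) with hR
  set K := ((k : ZMod ℓ)) with hK
  have hK2 : K ^ 2 ≠ 0 := pow_ne_zero 2 hk
  have hR2 : R ^ 2 ≠ 0 := pow_ne_zero 2 hr
  have hstep : (∑ a ∈ Finset.range ℓ,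
        (legendreSym ℓ (a : ℤ)) ^ e *
          ((legendreSym ℓ (r ^ 2 - (a : ℤ) * k ^ 2)) ^ 2 +
            legendreSym ℓ (r ^ 2 - (a : ℤ) * k ^ 2)))
      = ∑ x : ZMod ℓ, (χ x) ^ e * ((χ (R ^ 2 - x * K ^ 2)) ^ 2 + χ (R ^ 2 - x * K ^ 2)) := by
    rw [← sum_range_zmod (fun x => (χ x) ^ e * ((χ (R ^ 2 - x * K ^ 2)) ^ 2 + χ (R ^ 2 - x * K ^ 2)))]
    refine Finset.sum_congr rfl fun a _ => ?_
    have h1 : legendreSym ℓ (a : ℤ) = χ ((a : ℕ) : ZMod ℓ) := by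
      simp [legendreSym, hχ]
    have h2 : legendreSym ℓ (r ^ 2 - (a : ℤ) * k ^ 2)
        = χ (R ^ 2 - ((a : ℕ) : ZMod ℓ) * K ^ 2) := by
      rw [legendreSym, hχ, hR, hK]
      push_cast
      ring_nf
    rw [h1, h2]
  rw [hstep]
  -- basic sums
  have sum0 : ∑ x : ZMod ℓ, χ x = 0 := quadraticChar_sum_zero hchar
  have sum1 : ∑ x : ZMod ℓ, χ (R ^ 2 - x * K ^ 2) = 0 := by
    calc ∑ x : ZMod ℓ, χ (R ^ 2 - x * K ^ 2)
        = ∑ x : ZMod ℓ, χ (R ^ 2 + (-(K ^ 2)) * x) := by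
          refine Finset.sum_congr rfl fun x _ => ?_
          ring_nf
      _ = ∑ x : ZMod ℓ, χ x := sum_affine _ (neg_ne_zero.mpr hK2) _
      _ = 0 := sum0
  have sum2 : ∑ x : ZMod ℓ, (χ (R ^ 2 - x * K ^ 2)) ^ 2 = (ℓ : ℤ) - 1 := by
    calc ∑ x : ZMod ℓ, (χ (R ^ 2 - x * K ^ 2)) ^ 2
        = ∑ x : ZMod ℓ, (fun y => (χ y) ^ 2) (R ^ 2 + (-(K ^ 2)) * x) := by
          refine Finset.sum_congr rfl fun x _ => ?_
          ring_nf
      _ = ∑ x : ZMod ℓ, (χ x) ^ 2 := sum_affine (fun y => (χ y) ^ 2) (neg_ne_zero.mpr hK2) (R ^ 2)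
      _ = (ℓ : ℤ) - 1 := by rw [sum_quadChar_sq, ZMod.card]
  by_cases hE : Even e
  · -- even case
    rw [if_pos hE]
    have hpt : ∀ x : ZMod ℓ,
        (χ x) ^ e * ((χ (R ^ 2 - x * K ^ 2)) ^ 2 + χ (R ^ 2 - x * K ^ 2))
          = ((χ (R ^ 2 - x * K ^ 2)) ^ 2 + χ (R ^ 2 - x * K ^ 2))
            - (if x = 0 then (χ (R ^ 2 - x * K ^ 2)) ^ 2 + χ (R ^ 2 - x * K ^ 2) else 0) := by
      intro x
      by_cases hx : x = 0
      · subst hx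
        rw [if_pos rfl, MulChar.map_zero χ, zero_pow (by omega : e ≠ 0)]
        ring
      · rw [if_neg hx]
        rcases quadraticChar_dichotomy hx with h1 | h1 <;> rw [h1]
        · simp
        · rw [hE.neg_one_pow]; ring
    rw [Finset.sum_congr rfl fun x _ => hpt x, Finset.sum_sub_distrib,
      Finset.sum_add_distrib, sum1, sum2]
    have : ∑ x : ZMod ℓ,
        (if x = 0 then (χ (R ^ 2 - x * K ^ 2)) ^ 2 + χ (R ^ 2 - x * K ^ 2) else 0)
        = (χ (R ^ 2 - 0 * K ^ 2)) ^ 2 + χ (R ^ 2 - 0 * K ^ 2) := by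
      rw [Finset.sum_ite_eq' Finset.univ (0 : ZMod ℓ)
        (fun x => (χ (R ^ 2 - x * K ^ 2)) ^ 2 + χ (R ^ 2 - x * K ^ 2)), if_pos (Finset.mem_univ _)]
    rw [this]
    have h0 : R ^ 2 - (0 : ZMod ℓ) * K ^ 2 = R ^ 2 := by ring
    rw [h0, quadraticChar_sq_one hR2, quadraticChar_sq_one' hr]
    ring
  · -- odd case
    rw [if_neg hE]
    have hO : Odd e := Nat.odd_iff.mpr (Nat.not_even_iff.mp hE)
    have hpt : ∀ x : ZMod ℓ, (χ x) ^ e = χ x := by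
      intro x
      by_cases hx : x = 0
      · subst hx; rw [MulChar.map_zero χ, zero_pow (by omega : e ≠ 0)]
      · rcases quadraticChar_dichotomy hx with h1 | h1 <;> rw [h1]
        · exact one_pow e
        · exact hO.neg_one_pow
    simp only [hpt, mul_add]
    rw [Finset.sum_add_distrib]
    -- part A
    have hA : ∑ x : ZMod ℓ, χ x * (χ (R ^ 2 - x * K ^ 2)) ^ 2 = -1 := by
      set x₀ : ZMod ℓ := R ^ 2 * (K ^ 2)⁻¹ with hx₀
      have hptA : ∀ x : ZMod ℓ, χ x * (χ (R ^ 2 - x * K ^ 2)) ^ 2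
          = χ x - (if x = x₀ then χ x else 0) := by
        intro x
        by_cases hx : x = x₀
        · subst hx
          have : R ^ 2 - x₀ * K ^ 2 = 0 := by
            rw [hx₀]; field_simp; ring
          rw [this, if_pos rfl, MulChar.map_zero χ]
          ring
        · have hne : R ^ 2 - x * K ^ 2 ≠ 0 := by
            intro hc
            apply hx
            have hxe : x * K ^ 2 = R ^ 2 := by linear_combination -hc
            rw [hx₀, ← hxe]
            exact (mul_inv_cancel_right₀ hK2 x).symm
          rw [quadraticChar_sq_one hne, if_neg hx]
          ring
      rw [Finset.sum_congr rfl fun x _ => hptA x, Finset.sum_sub_distrib, sum0,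
        Finset.sum_ite_eq' Finset.univ x₀ (fun x => χ x), if_pos (Finset.mem_univ _)]
      have : x₀ = (R * K⁻¹) ^ 2 := by
        rw [hx₀]; field_simp
      rw [this, quadraticChar_sq_one' (mul_ne_zero hr (inv_ne_zero hk))]
      norm_num
    -- part B
    have hB : ∑ x : ZMod ℓ, χ x * χ (R ^ 2 - x * K ^ 2) = -χ (-1) := by
      have hmul : ∀ x : ZMod ℓ, χ x * χ (R ^ 2 - x * K ^ 2) = χ (x * (R ^ 2 - x * K ^ 2)) :=
        fun x => (map_mul χ _ _).symm
      rw [Finset.sum_congr rfl fun x _ => hmul x]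
      have hzero : χ ((0 : ZMod ℓ) * (R ^ 2 - 0 * K ^ 2)) = 0 := by
        rw [zero_mul, MulChar.map_zero χ]
      rw [← Finset.add_sum_erase Finset.univ _ (Finset.mem_univ (0 : ZMod ℓ)), hzero, zero_add]
      have hre : ∑ x ∈ Finset.univ.erase (0 : ZMod ℓ), χ (x * (R ^ 2 - x * K ^ 2))
          = ∑ w ∈ Finset.univ.erase (-(K ^ 2)), χ w := by
        refine Finset.sum_nbij' (fun x => R ^ 2 * x⁻¹ - K ^ 2)
          (fun w => R ^ 2 * (w + K ^ 2)⁻¹) ?_ ?_ ?_ ?_ ?_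
        · intro x hx
          have hx0 : x ≠ 0 := (Finset.mem_erase.mp hx).1
          refine Finset.mem_erase.mpr ⟨?_, Finset.mem_univ _⟩
          intro hc
          have : R ^ 2 * x⁻¹ = 0 := by linear_combination hc
          exact hR2 (by
            rcases mul_eq_zero.mp this with h' | h'
            · exact h'
            · exact absurd h' (inv_ne_zero hx0))
        · intro w hw
          have hw0 : w ≠ -(K ^ 2) := (Finset.mem_erase.mp hw).1
          have hwk : w + K ^ 2 ≠ 0 := fun hc => hw0 (by linear_combination hc)
          refine Finset.mem_erase.mpr ⟨mul_ne_zero hR2 (inv_ne_zero hwk), Finset.mem_univ _⟩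
        · intro x hx
          have hx0 : x ≠ 0 := (Finset.mem_erase.mp hx).1
          beta_reduce
          have h1 : R ^ 2 * x⁻¹ - K ^ 2 + K ^ 2 = R ^ 2 * x⁻¹ := by ring
          rw [h1, mul_inv, inv_inv, mul_inv_cancel_left₀ hR2]
        · intro w hw
          beta_reduce
          rw [mul_inv, inv_inv, mul_inv_cancel_left₀ hR2]
          ring
        · intro x hx
          have hx0 : x ≠ 0 := (Finset.mem_erase.mp hx).1
          have : x * (R ^ 2 - x * K ^ 2) = x ^ 2 * (R ^ 2 * x⁻¹ - K ^ 2) := by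
            field_simp
          rw [this, map_mul, quadraticChar_sq_one' hx0, one_mul]
      rw [hre, Finset.sum_erase_eq_sub (Finset.mem_univ _), sum0]
      have : χ (-(K ^ 2)) = χ (-1) := by
        rw [(by ring : -(K ^ 2) = -1 * K ^ 2), map_mul, quadraticChar_sq_one' hk, mul_one]
      rw [this]
      ring
    rw [hA, hB]
    have : legendreSym ℓ (-1) = χ (-1 : ZMod ℓ) := by
      rw [legendreSym, hχ]; norm_num
    rw [this]
    ring
end
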